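/- arXiv:0902.4877 — 9 statements merged into one kernel-verified Lean document; each statement's English description precedes it below -/
import Mathlib

section
/- Let d ≥ 1, let k be a positive integer with k ≤ d, and let Φ be a linear map on the d×d complex matrices. Then Φ is k-positive if and only if for every orthogonal projection q ∈ M_d(ℂ) (q = q* = q²) of rank k, the linear map on matrices indexed by Fin d × Fin d given by x ↦ (id_d ⊗ Φ)((q ⊗ 1_d) x (q ⊗ 1_d)) sends positive semidefinite matrices to positive semidefinite matrices, where q ⊗ 1_d denotes the Kronecker product of q with the d×d identity matrix. -/
open Matrix Kronecker
open scoped ComplexOrder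

noncomputable section

abbrev Mat (d : ℕ) := Matrix (Fin d) (Fin d) ℂ

abbrev MatMap (d : ℕ) := Mat d →ₗ[ℂ] Mat d

abbrev Mat2 (d : ℕ) := Matrix (Fin d × Fin d) (Fin d × Fin d) ℂ

/-- The blockwise action of `id_I ⊗ Φ` on matrices indexed by `I × Fin d`:
`((id ⊗ Φ) M)((i,a),(j,b))` is the `(a,b)` entry of `Φ` applied to the `(i,j)` block of `M`. -/
def tensId {d : ℕ} (I : Type) (Φ : Mat d → Mat d)
    (M : Matrix (I × Fin d) (I × Fin d) ℂ) : Matrix (I × Fin d) (I × Fin d) ℂ :=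
  Matrix.of fun p q => Φ (Matrix.of fun a b => M (p.1, a) (q.1, b)) p.2 q.2

/-- `Φ` is `k`-positive: `id_{Fin k} ⊗ Φ` sends PSD matrices to PSD matrices. -/
def kPositive (d k : ℕ) (Φ : Mat d → Mat d) : Prop :=
  ∀ M : Matrix (Fin k × Fin d) (Fin k × Fin d) ℂ,
    M.PosSemidef → (tensId (Fin k) Φ M).PosSemidef

/-- `Φ` is completely positive: `k`-positive for every positive integer `k`. -/
def CompletelyPositive (d : ℕ) (Φ : Mat d → Mat d) : Prop :=
  ∀ k : ℕ, 0 < k → kPositive d k Φ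

/-- `Φ` is `k`-superpositive: a finite sum of maps `Ad_{a_i} : x ↦ aᵢ* x aᵢ`
with `rank aᵢ ≤ k`. -/
def kSuperpositive (d k : ℕ) (Φ : Mat d → Mat d) : Prop :=
  ∃ (n : ℕ) (a : Fin n → Mat d),
    (∀ i, (a i).rank ≤ k) ∧ ∀ x, Φ x = ∑ i, (a i)ᴴ * x * a i

/-- The Choi matrix of `Φ`: `C_Φ((i,a),(j,b)) = Φ(e_{ij})(a,b)`. -/
def choi {d : ℕ} (Φ : Mat d → Mat d) : Mat2 d :=
  Matrix.of fun p q => Φ (Matrix.single p.1 q.1 (1 : ℂ)) p.2 q.2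

/-- `v` has Schmidt rank at most `k`: `v = ∑_{l<k} φ_l ⊗ ψ_l`. -/
def SchmidtRankLE (d k : ℕ) (v : Fin d × Fin d → ℂ) : Prop :=
  ∃ φ ψ : Fin k → Fin d → ℂ, v = fun p => ∑ l, φ l p.1 * ψ l p.2

/-- `A` is `k`-block positive: Hermitian and `⟨v, A v⟩ ≥ 0` for every `v` of
Schmidt rank at most `k`. -/
def kBlockPositive (d k : ℕ) (A : Mat2 d) : Prop :=
  A.IsHermitian ∧ ∀ v : Fin d × Fin d → ℂ, SchmidtRankLE d k v → 0 ≤ star v ⬝ᵥ A *ᵥ v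

/-- `b` is `k`-separable: a finite sum of rank-one matrices `v v*` with `v` of
Schmidt rank at most `k`. -/
def kSeparable (d k : ℕ) (b : Mat2 d) : Prop :=
  ∃ (n : ℕ) (v : Fin n → (Fin d × Fin d → ℂ)),
    (∀ i, SchmidtRankLE d k (v i)) ∧ b = ∑ i, Matrix.vecMulVec (v i) (star (v i))

/-- `Φ` preserves Hermiticity. -/
def HermPreserving (d : ℕ) (Φ : Mat d → Mat d) : Prop :=
  ∀ x : Mat d, x.IsHermitian → (Φ x).IsHermitian

/-- The map `Ad_a : x ↦ a* x a`. -/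
def adFun {d : ℕ} (a : Mat d) : Mat d → Mat d := fun x => aᴴ * x * a

/-- Elementary tensor of two vectors: `(φ ⊗ ψ)(i,a) = φ(i)·ψ(a)`. -/
def tensorVec {d : ℕ} (φ ψ : Fin d → ℂ) : Fin d × Fin d → ℂ := fun p => φ p.1 * ψ p.2

/-- The unnormalized maximally entangled vector `ψ₊ = ∑ᵢ eᵢ ⊗ eᵢ`. -/
def psiPlus (d : ℕ) : Fin d × Fin d → ℂ := fun p => if p.1 = p.2 then 1 else 0

/-- `P₊ = ψ₊ ψ₊*`. -/
def Pplus (d : ℕ) : Mat2 d := Matrix.vecMulVec (psiPlus d) (star (psiPlus d))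

/-- The transpose, as a linear map on matrices. -/
def transLM (d : ℕ) : MatMap d where
  toFun x := xᵀ
  map_add' x y := by simp
  map_smul' c x := by simp



section Aux

lemma kron_one_conjT {d : ℕ} {I J : Type} (V : Matrix I J ℂ) :
    (V ⊗ₖ (1 : Mat d))ᴴ = Vᴴ ⊗ₖ (1 : Mat d) := by
  ext ⟨i, a⟩ ⟨j, b⟩
  by_cases hab : a = b <;>
    simp [conjTranspose_apply, Matrix.one_apply, hab, eq_comm, apply_ite (star : ℂ → ℂ)]

lemma sandwich1 {α β : Type} [Fintype α] [Fintype β] [DecidableEq α] [DecidableEq β] (e : Matrix α β ℂ) (f : Matrix β α ℂ)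
    (hfe : f * e = 1) (M : Matrix β β ℂ) :
    (e * f) * (e * M * f) * (e * f) = e * M * f := by
  have h : f * (e * (M * (f * (e * f)))) = M * f := by
    rw [← Matrix.mul_assoc f e, hfe, Matrix.one_mul, ← Matrix.mul_assoc f e, hfe,
      Matrix.one_mul]
  calc (e * f) * (e * M * f) * (e * f) = e * (f * (e * (M * (f * (e * f))))) := by
        simp only [Matrix.mul_assoc]
    _ = e * (M * f) := by rw [h]
    _ = e * M * f := by rw [Matrix.mul_assoc]

lemma sandwich2 {α β : Type} [Fintype α] [Fintype β] [DecidableEq α] [DecidableEq β] (e : Matrix α β ℂ) (f : Matrix β α ℂ)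
    (hfe : f * e = 1) (M : Matrix β β ℂ) :
    f * (e * M * f) * e = M := by
  calc f * (e * M * f) * e = f * (e * (M * (f * e))) := by simp only [Matrix.mul_assoc]
    _ = M := by rw [← Matrix.mul_assoc f e, hfe, Matrix.one_mul, Matrix.mul_one]

lemma sandwich3 {α β : Type} [Fintype α] [Fintype β] [DecidableEq α] [DecidableEq β] (e : Matrix α β ℂ) (f : Matrix β α ℂ)
    (x : Matrix α α ℂ) :
    (e * f) * x * (e * f) = e * (f * x * e) * f := by
  simp only [Matrix.mul_assoc]

lemma isom_facts {d k : ℕ} (V : Matrix (Fin d) (Fin k) ℂ) (hVV : Vᴴ * V = 1) :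
    (V * Vᴴ).IsHermitian ∧ (V * Vᴴ) * (V * Vᴴ) = V * Vᴴ ∧ (V * Vᴴ).rank = k := by
  refine ⟨isHermitian_mul_conjTranspose_self V, ?_, ?_⟩
  · rw [Matrix.mul_assoc V Vᴴ (V * Vᴴ), ← Matrix.mul_assoc Vᴴ V Vᴴ, hVV, Matrix.one_mul]
  · rw [Matrix.rank_self_mul_conjTranspose]
    refine le_antisymm (V.rank_le_card_width.trans_eq (Fintype.card_fin k)) ?_
    calc k = (1 : Matrix (Fin k) (Fin k) ℂ).rank := by
          rw [Matrix.rank_one, Fintype.card_fin]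
      _ = (Vᴴ * V).rank := by rw [hVV]
      _ ≤ V.rank := Matrix.rank_mul_le_right _ _


lemma tensId_conj {d : ℕ} {I J : Type} [Fintype I] [Fintype J] [DecidableEq I] [DecidableEq J]
    (Φ : MatMap d) (V : Matrix I J ℂ) (W : Matrix J I ℂ)
    (M : Matrix (J × Fin d) (J × Fin d) ℂ) :
    tensId I ⇑Φ ((V ⊗ₖ (1 : Mat d)) * M * (W ⊗ₖ (1 : Mat d))) =
      (V ⊗ₖ (1 : Mat d)) * tensId J ⇑Φ M * (W ⊗ₖ (1 : Mat d)) := by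
  ext ⟨i, a⟩ ⟨j, b⟩
  have hblk : (Matrix.of fun a' b' => ((V ⊗ₖ (1 : Mat d)) * M * (W ⊗ₖ (1 : Mat d))) (i, a') (j, b'))
      = ∑ p, ∑ q, (V i p * W q j) • (Matrix.of fun a b => M (p, a) (q, b)) := by
    ext a' b'
    simp only [Matrix.of_apply, Matrix.mul_apply, Fintype.sum_prod_type, kroneckerMap_apply,
      Matrix.one_apply, Finset.sum_apply, Matrix.sum_apply, Matrix.smul_apply, smul_eq_mul,
      mul_ite, ite_mul, mul_zero, zero_mul, mul_one, one_mul, Finset.sum_ite_eq,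
      Finset.sum_ite_eq', Finset.mem_univ, if_true, Finset.sum_mul, Finset.mul_sum]
    rw [Finset.sum_comm]
    exact Finset.sum_congr rfl fun p _ => Finset.sum_congr rfl fun q _ => by ring
  show (Φ _) a b = _
  rw [hblk]
  simp only [map_sum, _root_.map_smul, Matrix.mul_apply, Fintype.sum_prod_type, kroneckerMap_apply,
    Matrix.one_apply, Finset.sum_apply, Matrix.sum_apply, Matrix.smul_apply, smul_eq_mul,
    mul_ite, ite_mul, mul_zero, zero_mul, mul_one, one_mul, Finset.sum_ite_eq,
    Finset.sum_ite_eq', Finset.mem_univ, if_true, tensId, Matrix.of_apply, Finset.sum_mul,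
    Finset.mul_sum]
  rw [Finset.sum_comm]
  exact Finset.sum_congr rfl fun p _ => Finset.sum_congr rfl fun q _ => by ring

lemma proj_factor {d k : ℕ} (q : Mat d) (hq : q.IsHermitian) (h2 : q * q = q)
    (hr : q.rank = k) :
    ∃ V : Matrix (Fin d) (Fin k) ℂ, Vᴴ * V = 1 ∧ V * Vᴴ = q := by
  classical
  obtain ⟨ev, U, hUU, hUU', hq2, hcard⟩ :
      ∃ (ev : Fin d → ℝ) (U : Mat d), Uᴴ * U = 1 ∧ U * Uᴴ = 1 ∧
        q = U * diagonal (fun p => (ev p : ℂ)) * Uᴴ ∧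
        Fintype.card {i // ev i ≠ 0} = k := by
    refine ⟨hq.eigenvalues, (hq.eigenvectorUnitary : Mat d), ?_, ?_, ?_, ?_⟩
    · simpa [star_eq_conjTranspose] using Unitary.coe_star_mul_self hq.eigenvectorUnitary
    · simpa [star_eq_conjTranspose] using Unitary.coe_mul_star_self hq.eigenvectorUnitary
    · simpa [star_eq_conjTranspose, Function.comp_def] using hq.spectral_theorem
    · rw [← hq.rank_eq_card_non_zero_eigs, hr]
  clear hq hr
  -- eigenvalues are 0 or 1
  have hD : ∀ i, ev i = 0 ∨ ev i = 1 := by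
    have hdiag : Uᴴ * q * U = diagonal (fun p => (ev p : ℂ)) := by
      rw [hq2]
      calc Uᴴ * (U * diagonal (fun p => (ev p : ℂ)) * Uᴴ) * U
          = (Uᴴ * U) * diagonal (fun p => (ev p : ℂ)) * (Uᴴ * U) := by noncomm_ring
        _ = _ := by rw [hUU, one_mul, mul_one]
    have h2' : diagonal (fun p => (ev p : ℂ)) * diagonal (fun p => (ev p : ℂ))
        = diagonal (fun p => (ev p : ℂ)) := by
      rw [← hdiag]
      calc (Uᴴ * q * U) * (Uᴴ * q * U) = Uᴴ * (q * (U * Uᴴ) * q) * U := by noncomm_ring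
        _ = Uᴴ * q * U := by rw [hUU', mul_one, h2, mul_assoc]
    intro i
    have h := congr_fun (congr_fun h2' i) i
    simp only [diagonal_mul_diagonal, diagonal_apply_eq] at h
    have h0 : (ev i : ℂ) * ((ev i : ℂ) - 1) = 0 := by linear_combination h
    rcases mul_eq_zero.mp h0 with h | h
    · left; exact_mod_cast h
    · right; have : (ev i : ℂ) = 1 := by linear_combination h
      exact_mod_cast this
  let e : Fin k ≃ {i // ev i ≠ 0} := (Fintype.equivFinOfCardEq hcard).symm
  let f : Fin k → Fin d := fun l => (e l).1
  have hf : Function.Injective f := fun l l' h => e.injective (Subtype.ext h)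
  have hev1 : ∀ l, ev (f l) = 1 := fun l => (hD (f l)).resolve_left (e l).2
  refine ⟨U.submatrix id f, ?_, ?_⟩
  · ext l l'
    have h1 : ((U.submatrix id f)ᴴ * U.submatrix id f) l l' = (Uᴴ * U) (f l) (f l') := by
      simp [Matrix.mul_apply, Matrix.submatrix_apply, conjTranspose_apply]
    rw [h1, hUU]
    simp [Matrix.one_apply, hf.eq_iff]
  · ext i j
    have hentry : q i j = ∑ p, U i p * (ev p : ℂ) * star (U j p) := by
      rw [hq2]
      simp only [Matrix.mul_apply, conjTranspose_apply, diagonal_apply, mul_ite, ite_mul,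
        mul_zero, zero_mul, Finset.sum_ite_eq, Finset.sum_ite_eq', Finset.mem_univ, if_true,
        Finset.sum_mul]
    have hL : (U.submatrix id f * (U.submatrix id f)ᴴ) i j
        = ∑ l, U i (f l) * star (U j (f l)) := by
      simp [Matrix.mul_apply, Matrix.submatrix_apply, conjTranspose_apply]
    rw [hL, hentry]
    have step1 : ∑ p, U i p * (ev p : ℂ) * star (U j p)
        = ∑ p ∈ Finset.univ.filter (fun p => ev p ≠ 0),
            U i p * (ev p : ℂ) * star (U j p) :=
      (Finset.sum_filter_of_ne (fun p _ hp =>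
        by intro hp0; exact hp (by simp [hp0]))).symm
    have step2 : ∑ p ∈ Finset.univ.filter (fun p => ev p ≠ 0),
            U i p * (ev p : ℂ) * star (U j p)
        = ∑ s : {i // ev i ≠ 0}, U i s.1 * (ev s.1 : ℂ) * star (U j s.1) :=
      Finset.sum_subtype _ (fun x => by simp) _
    have step3 : ∑ s : {i // ev i ≠ 0}, U i s.1 * (ev s.1 : ℂ) * star (U j s.1)
        = ∑ l : Fin k, U i (f l) * (ev (f l) : ℂ) * star (U j (f l)) :=
      (Equiv.sum_comp e (fun s => U i s.1 * (ev s.1 : ℂ) * star (U j s.1))).symm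
    rw [step1, step2, step3]
    exact (Finset.sum_congr rfl fun l _ => by rw [hev1 l]; push_cast; ring).symm

end Aux

/-- `Φ` is `k`-positive iff for every orthogonal projection `q` of rank `k`,
the map `x ↦ (id_d ⊗ Φ)((q ⊗ 1) x (q ⊗ 1))` sends PSD matrices to PSD matrices. -/
theorem stmt0 (d k : ℕ) (hd : 1 ≤ d) (hk : 1 ≤ k) (hkd : k ≤ d) (Φ : MatMap d) :
    kPositive d k ⇑Φ ↔
      ∀ q : Mat d, q.IsHermitian → q * q = q → q.rank = k →
        ∀ x : Mat2 d, x.PosSemidef →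
          (tensId (Fin d) ⇑Φ
            ((q ⊗ₖ (1 : Mat d)) * x * (q ⊗ₖ (1 : Mat d)))).PosSemidef := by
  constructor
  · -- forward direction
    intro hpos q hherm hidem hrank x hx
    obtain ⟨V, hVV, hq⟩ := proj_factor q hherm hidem hrank
    have hk1 : (V ⊗ₖ (1 : Mat d)) * (Vᴴ ⊗ₖ (1 : Mat d)) = q ⊗ₖ (1 : Mat d) := by
      rw [← mul_kronecker_mul, Matrix.one_mul, hq]
    set y := (Vᴴ ⊗ₖ (1 : Mat d)) * x * (V ⊗ₖ (1 : Mat d)) with hy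
    have hyPSD : y.PosSemidef := by
      have := hx.mul_mul_conjTranspose_same (Vᴴ ⊗ₖ (1 : Mat d))
      rwa [kron_one_conjT, conjTranspose_conjTranspose] at this
    have hsplit : (q ⊗ₖ (1 : Mat d)) * x * (q ⊗ₖ (1 : Mat d))
        = (V ⊗ₖ (1 : Mat d)) * y * (Vᴴ ⊗ₖ (1 : Mat d)) := by
      rw [← hk1, hy]
      exact sandwich3 _ _ _
    rw [hsplit, tensId_conj]
    have := (hpos y hyPSD).mul_mul_conjTranspose_same (V ⊗ₖ (1 : Mat d))
    rwa [kron_one_conjT] at this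
  · -- reverse direction
    intro h M hM
    set V : Matrix (Fin d) (Fin k) ℂ :=
      Matrix.of fun i l => if i = Fin.castLE hkd l then 1 else 0 with hVdef
    have hVV : Vᴴ * V = 1 := by
      ext l l'
      simp only [Matrix.mul_apply, conjTranspose_apply, Matrix.of_apply, hVdef,
        apply_ite (star : ℂ → ℂ), star_one, star_zero, ite_mul, one_mul, zero_mul, mul_ite,
        mul_one, mul_zero, Finset.sum_ite_eq, Finset.mem_univ, if_true, Matrix.one_apply]
      by_cases hll : l = l'
      · subst hll; simp
      · have h1 : Fin.castLE hkd l ≠ Fin.castLE hkd l' :=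
          fun hc => hll (Fin.castLE_injective hkd hc)
        have h2 : l' ≠ l := fun hc => hll hc.symm
        simp [hll, h1, h2]
    obtain ⟨hherm, hidem, hrank⟩ := isom_facts V hVV
    set q : Mat d := V * Vᴴ with hqdef
    set x : Mat2 d := (V ⊗ₖ (1 : Mat d)) * M * (Vᴴ ⊗ₖ (1 : Mat d)) with hxdef
    have hxPSD : x.PosSemidef := by
      have := hM.mul_mul_conjTranspose_same (V ⊗ₖ (1 : Mat d))
      rwa [kron_one_conjT] at this
    have hcomp : (Vᴴ ⊗ₖ (1 : Mat d)) * (V ⊗ₖ (1 : Mat d))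
        = (1 : Matrix (Fin k × Fin d) (Fin k × Fin d) ℂ) := by
      rw [← mul_kronecker_mul, hVV, Matrix.one_mul, one_kronecker_one]
    have hq1 : (V ⊗ₖ (1 : Mat d)) * (Vᴴ ⊗ₖ (1 : Mat d)) = q ⊗ₖ (1 : Mat d) := by
      rw [← mul_kronecker_mul, Matrix.one_mul, ← hqdef]
    have hqx : (q ⊗ₖ (1 : Mat d)) * x * (q ⊗ₖ (1 : Mat d)) = x := by
      rw [← hq1, hxdef]
      exact sandwich1 _ _ hcomp _
    have hT := h q hherm hidem hrank x hxPSD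
    rw [hqx] at hT
    have hback : (Vᴴ ⊗ₖ (1 : Mat d)) * x * (V ⊗ₖ (1 : Mat d)) = M := by
      rw [hxdef]
      exact sandwich2 _ _ hcomp _
    have hgoal : tensId (Fin k) ⇑Φ M
        = (Vᴴ ⊗ₖ (1 : Mat d)) * tensId (Fin d) ⇑Φ x * (V ⊗ₖ (1 : Mat d)) := by
      rw [← tensId_conj, hback]
    rw [hgoal]
    have := hT.mul_mul_conjTranspose_same (Vᴴ ⊗ₖ (1 : Mat d))
    rwa [kron_one_conjT, conjTranspose_conjTranspose] at this
end
end

section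
/- (Generalized Jamiołkowski–Choi theorem) Let d ≥ 1, let k ≥ 1, and let Φ be a Hermiticity-preserving linear map on the d×d complex matrices. Then Φ is k-positive if and only if its Choi matrix C_Φ is k-block positive. -/
open Matrix Kronecker
open scoped ComplexOrder

noncomputable section

/-! ### Auxiliary lemmas -/

lemma sum_dot' {n κ : Type} [Fintype n] [Fintype κ] (f : κ → n → ℂ) (w : n → ℂ) :
    (∑ l, f l) ⬝ᵥ w = ∑ l, f l ⬝ᵥ w := by
  simp only [dotProduct, Finset.sum_apply, Finset.sum_mul]
  exact Finset.sum_comm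

lemma dot_sum' {n κ : Type} [Fintype n] [Fintype κ] (v : n → ℂ) (g : κ → n → ℂ) :
    v ⬝ᵥ (∑ m, g m) = ∑ m, v ⬝ᵥ g m := by
  simp only [dotProduct, Finset.sum_apply, Finset.mul_sum]
  exact Finset.sum_comm

lemma mulVec_sum' {n κ : Type} [Fintype n] [Fintype κ] (C : Matrix n n ℂ) (g : κ → n → ℂ) :
    C *ᵥ (∑ m, g m) = ∑ m, C *ᵥ g m := by
  ext p
  simp only [mulVec, Finset.sum_apply]
  exact dot_sum' _ _

lemma sum_mulVec' {n κ : Type} [Fintype n] [Fintype κ] (X : κ → Matrix n n ℂ) (z : n → ℂ) :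
    (∑ r, X r) *ᵥ z = ∑ r, X r *ᵥ z := by
  ext p
  simp only [mulVec, dotProduct, Finset.sum_apply, Matrix.sum_apply, Finset.sum_mul]
  exact Finset.sum_comm

lemma dot_sum_sum' {n κ : Type} [Fintype n] [Fintype κ] (C : Matrix n n ℂ) (f g : κ → n → ℂ) :
    star (∑ l, f l) ⬝ᵥ C *ᵥ (∑ m, g m) = ∑ l, ∑ m, star (f l) ⬝ᵥ C *ᵥ g m := by
  rw [star_sum, mulVec_sum', sum_dot']
  exact Finset.sum_congr rfl fun l _ => dot_sum' _ _

lemma dot_sumMat' {n κ : Type} [Fintype n] [Fintype κ] (x : n → ℂ) (X : κ → Matrix n n ℂ)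
    (z : n → ℂ) : x ⬝ᵥ (∑ r, X r) *ᵥ z = ∑ r, x ⬝ᵥ X r *ᵥ z := by
  rw [sum_mulVec', dot_sum']

lemma map_ct {d : ℕ} (Φ : MatMap d) (hΦ : HermPreserving d ⇑Φ) (x : Mat d) :
    Φ xᴴ = (Φ x)ᴴ := by
  obtain ⟨H, hHdef⟩ : ∃ H : Mat d, H = x + xᴴ := ⟨_, rfl⟩
  obtain ⟨K, hKdef⟩ : ∃ K : Mat d, K = Complex.I • (x - xᴴ) := ⟨_, rfl⟩
  have hH : H.IsHermitian := by
    simp [Matrix.IsHermitian, hHdef, add_comm]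
  have hK : K.IsHermitian := by
    unfold Matrix.IsHermitian
    rw [hKdef, Matrix.conjTranspose_smul, Matrix.conjTranspose_sub,
      Matrix.conjTranspose_conjTranspose]
    simp [Complex.star_def, Complex.conj_I, smul_sub]
    abel
  have h1 := hΦ H hH
  have h2 := hΦ K hK
  have hx : x = (1/2 : ℂ) • H + (-(Complex.I)/2) • K := by
    ext i j
    simp only [hHdef, hKdef, Matrix.add_apply, Matrix.smul_apply, Matrix.sub_apply, smul_eq_mul]
    ring_nf
    simp [Complex.I_sq]
    ring
  have hxc : xᴴ = (1/2 : ℂ) • H + ((Complex.I)/2) • K := by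
    ext i j
    simp only [hHdef, hKdef, Matrix.add_apply, Matrix.smul_apply, Matrix.sub_apply, smul_eq_mul]
    ring_nf
    simp [Complex.I_sq]
    ring
  conv_lhs => rw [hxc]
  conv_rhs => rw [hx]
  rw [map_add, _root_.map_smul, _root_.map_smul, map_add, _root_.map_smul, _root_.map_smul,
    Matrix.conjTranspose_add, Matrix.conjTranspose_smul, Matrix.conjTranspose_smul,
    h1.eq, h2.eq]
  simp [Complex.star_def]

lemma phi_apply {d : ℕ} (Φ : MatMap d) (x : Mat d) (a b : Fin d) :
    Φ x a b = ∑ i, ∑ j, x i j * choi ⇑Φ (i, a) (j, b) := by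
  have hx : x = ∑ i, ∑ j, x i j • Matrix.single i j (1 : ℂ) := by
    conv_lhs => rw [Matrix.matrix_eq_sum_single x]
    refine Finset.sum_congr rfl fun i _ => Finset.sum_congr rfl fun j _ => ?_
    rw [Matrix.smul_single, smul_eq_mul, mul_one]
  conv_lhs => rw [hx]
  rw [map_sum]
  simp only [map_sum, _root_.map_smul, Matrix.sum_apply, Matrix.smul_apply, smul_eq_mul]
  rfl

lemma core {d : ℕ} (Φ : MatMap d) (φ ψ φ' ψ' : Fin d → ℂ) :
    star (tensorVec φ ψ) ⬝ᵥ choi ⇑Φ *ᵥ tensorVec φ' ψ'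
      = star ψ ⬝ᵥ (Φ (Matrix.vecMulVec (star φ) φ')) *ᵥ ψ' := by
  have lhs_eq : star (tensorVec φ ψ) ⬝ᵥ choi ⇑Φ *ᵥ tensorVec φ' ψ'
      = ∑ i, ∑ a, ∑ j, ∑ b, (starRingEnd ℂ (φ i) * starRingEnd ℂ (ψ a)) *
          (choi ⇑Φ (i, a) (j, b) * (φ' j * ψ' b)) := by
    simp only [dotProduct, mulVec, Pi.star_apply, tensorVec, Fintype.sum_prod_type,
      star_mul', Finset.mul_sum, RCLike.star_def, mul_comm]
  have rhs_eq : star ψ ⬝ᵥ (Φ (Matrix.vecMulVec (star φ) φ')) *ᵥ ψ'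
      = ∑ a, ∑ b, ∑ i, ∑ j, starRingEnd ℂ (ψ a) *
          ((starRingEnd ℂ (φ i) * φ' j * choi ⇑Φ (i, a) (j, b)) * ψ' b) := by
    simp only [dotProduct, mulVec, Pi.star_apply, phi_apply, Matrix.vecMulVec_apply,
      Finset.mul_sum, Finset.sum_mul, RCLike.star_def]
  rw [lhs_eq, rhs_eq]
  rw [show (∑ a, ∑ b, ∑ i, ∑ j, starRingEnd ℂ (ψ a) *
          ((starRingEnd ℂ (φ i) * φ' j * choi ⇑Φ (i, a) (j, b)) * ψ' b))
      = ∑ a, ∑ i, ∑ b, ∑ j, starRingEnd ℂ (ψ a) *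
          ((starRingEnd ℂ (φ i) * φ' j * choi ⇑Φ (i, a) (j, b)) * ψ' b) from
    Finset.sum_congr rfl fun a _ => Finset.sum_comm]
  rw [show (∑ a, ∑ i, ∑ b, ∑ j, starRingEnd ℂ (ψ a) *
          ((starRingEnd ℂ (φ i) * φ' j * choi ⇑Φ (i, a) (j, b)) * ψ' b))
      = ∑ a, ∑ i, ∑ j, ∑ b, starRingEnd ℂ (ψ a) *
          ((starRingEnd ℂ (φ i) * φ' j * choi ⇑Φ (i, a) (j, b)) * ψ' b) from
    Finset.sum_congr rfl fun a _ => Finset.sum_congr rfl fun i _ => Finset.sum_comm]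
  rw [show (∑ a, ∑ i, ∑ j, ∑ b, starRingEnd ℂ (ψ a) *
          ((starRingEnd ℂ (φ i) * φ' j * choi ⇑Φ (i, a) (j, b)) * ψ' b))
      = ∑ i, ∑ a, ∑ j, ∑ b, starRingEnd ℂ (ψ a) *
          ((starRingEnd ℂ (φ i) * φ' j * choi ⇑Φ (i, a) (j, b)) * ψ' b) from
    Finset.sum_comm]
  refine Finset.sum_congr rfl fun i _ => Finset.sum_congr rfl fun a _ =>
    Finset.sum_congr rfl fun j _ => Finset.sum_congr rfl fun b _ => by ring

lemma quad_tensId {d k : ℕ} (Φ : MatMap d) (M : Matrix (Fin k × Fin d) (Fin k × Fin d) ℂ)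
    (w : Fin k × Fin d → ℂ) :
    star w ⬝ᵥ tensId (Fin k) ⇑Φ M *ᵥ w
      = ∑ l, ∑ m, star (fun a => w (l, a)) ⬝ᵥ
          Φ (Matrix.of fun i j => M (l, i) (m, j)) *ᵥ (fun b => w (m, b)) := by
  have lhs_eq : star w ⬝ᵥ tensId (Fin k) ⇑Φ M *ᵥ w
      = ∑ l, ∑ a, ∑ m, starRingEnd ℂ (w (l, a)) *
          ∑ b, Φ (Matrix.of fun i j => M (l, i) (m, j)) a b * w (m, b) := by
    simp only [dotProduct, mulVec, Pi.star_apply, tensId, Matrix.of_apply,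
      Fintype.sum_prod_type, Finset.mul_sum, RCLike.star_def]
  rw [lhs_eq]
  rw [show (∑ l, ∑ a, ∑ m, starRingEnd ℂ (w (l, a)) *
          ∑ b, Φ (Matrix.of fun i j => M (l, i) (m, j)) a b * w (m, b))
      = ∑ l, ∑ m, ∑ a, starRingEnd ℂ (w (l, a)) *
          ∑ b, Φ (Matrix.of fun i j => M (l, i) (m, j)) a b * w (m, b) from
    Finset.sum_congr rfl fun l _ => Finset.sum_comm]
  rfl

lemma psd_vecMulVec {n : Type} [Fintype n] (u : n → ℂ) :
    (Matrix.vecMulVec u (star u)).PosSemidef := by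
  refine Matrix.PosSemidef.of_dotProduct_mulVec_nonneg ?_ ?_
  · ext p q
    simp only [Matrix.conjTranspose_apply, Matrix.vecMulVec_apply, Pi.star_apply, star_mul',
      star_star]
    exact mul_comm _ _
  · intro x
    have e0 : star (star u ⬝ᵥ x) = ∑ p, star (x p) * u p := by
      simp only [dotProduct, star_sum, star_mul', star_star, Pi.star_apply]
      exact Finset.sum_congr rfl fun p _ => mul_comm _ _
    have h : star x ⬝ᵥ Matrix.vecMulVec u (star u) *ᵥ x
        = star (star u ⬝ᵥ x) * (star u ⬝ᵥ x) := by
      rw [e0, show star u ⬝ᵥ x = ∑ q, star (u q) * x q from rfl, Finset.sum_mul_sum]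
      simp only [dotProduct, mulVec, Matrix.vecMulVec_apply, Pi.star_apply, Finset.mul_sum]
      refine Finset.sum_congr rfl fun p _ => Finset.sum_congr rfl fun q _ => by ring
    rw [h]
    exact star_mul_self_nonneg _

/-- Generalized Jamiołkowski–Choi theorem: a Hermiticity-preserving map is
`k`-positive iff its Choi matrix is `k`-block positive. -/
theorem stmt1 (d k : ℕ) (hd : 1 ≤ d) (hk : 1 ≤ k) (Φ : MatMap d)
    (hΦ : HermPreserving d ⇑Φ) :
    kPositive d k ⇑Φ ↔ kBlockPositive d k (choi ⇑Φ) := by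
  constructor
  · intro hpos
    constructor
    · -- the Choi matrix is Hermitian
      ext p q
      rw [Matrix.conjTranspose_apply]
      show star (Φ (Matrix.single q.1 p.1 1) q.2 p.2)
        = Φ (Matrix.single p.1 q.1 1) p.2 q.2
      have hstd : (Matrix.single q.1 p.1 (1:ℂ))ᴴ = Matrix.single p.1 q.1 1 := by
        ext i j
        simp only [Matrix.conjTranspose_apply, Matrix.single, Matrix.of_apply]
        split_ifs with h1 h2 h3 <;> simp_all <;> tauto
      calc star (Φ (Matrix.single q.1 p.1 1) q.2 p.2)
          = (Φ (Matrix.single q.1 p.1 1))ᴴ p.2 q.2 := rfl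
        _ = Φ ((Matrix.single q.1 p.1 1)ᴴ) p.2 q.2 := by rw [map_ct Φ hΦ]
        _ = Φ (Matrix.single p.1 q.1 1) p.2 q.2 := by rw [hstd]
    · rintro v ⟨φ, ψ, hv⟩
      set u : Fin k × Fin d → ℂ := fun p => star (φ p.1 p.2) with hu
      have hN := psd_vecMulVec u
      have hP := hpos _ hN
      have h0 := hP.dotProduct_mulVec_nonneg (fun p => ψ p.1 p.2)
      have hblock : ∀ l m : Fin k,
          (Matrix.of fun i j => Matrix.vecMulVec u (star u) (l, i) (m, j))
            = Matrix.vecMulVec (star (φ l)) (φ m) := by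
        intro l m
        ext i j
        simp [Matrix.vecMulVec_apply, hu]
      have hv' : v = ∑ l, tensorVec (φ l) (ψ l) := by
        funext p
        rw [hv]
        simp [tensorVec, Finset.sum_apply]
      have key : star v ⬝ᵥ choi ⇑Φ *ᵥ v
          = star (fun p : Fin k × Fin d => ψ p.1 p.2) ⬝ᵥ
              tensId (Fin k) ⇑Φ (Matrix.vecMulVec u (star u)) *ᵥ
              (fun p : Fin k × Fin d => ψ p.1 p.2) := by
        rw [hv', dot_sum_sum', quad_tensId]
        refine Finset.sum_congr rfl fun l _ => Finset.sum_congr rfl fun m _ => ?_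
        rw [core, hblock]
      rw [key] at *
      exact h0
  · intro hbp
    intro M hM
    refine Matrix.PosSemidef.of_dotProduct_mulVec_nonneg ?_ ?_
    · -- Hermitian
      ext p q
      rw [Matrix.conjTranspose_apply]
      show star (Φ (Matrix.of fun i j => M (q.1, i) (p.1, j)) q.2 p.2)
        = Φ (Matrix.of fun i j => M (p.1, i) (q.1, j)) p.2 q.2
      have hb : (Matrix.of fun i j => M (q.1, i) (p.1, j))ᴴ
          = Matrix.of fun i j => M (p.1, i) (q.1, j) := by
        ext i j
        simp only [Matrix.conjTranspose_apply, Matrix.of_apply]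
        rw [← Matrix.conjTranspose_apply, hM.1]
      calc star (Φ (Matrix.of fun i j => M (q.1, i) (p.1, j)) q.2 p.2)
          = (Φ (Matrix.of fun i j => M (q.1, i) (p.1, j)))ᴴ p.2 q.2 := rfl
        _ = Φ ((Matrix.of fun i j => M (q.1, i) (p.1, j))ᴴ) p.2 q.2 := by rw [map_ct Φ hΦ]
        _ = Φ (Matrix.of fun i j => M (p.1, i) (q.1, j)) p.2 q.2 := by rw [hb]
    · intro w
      open scoped MatrixOrder in
      set A := CFC.sqrt M with hAdef
      open scoped MatrixOrder in
      have hA : A.PosSemidef := (CFC.sqrt_nonneg M).posSemidef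
      open scoped MatrixOrder in
      have hMA : A * A = M := CFC.sqrt_mul_sqrt_self M hM.nonneg
      have hMent : ∀ p q, M p q = ∑ r, A p r * star (A q r) := by
        intro p q
        rw [← hMA, Matrix.mul_apply]
        refine Finset.sum_congr rfl fun r _ => ?_
        congr 1
        rw [← Matrix.conjTranspose_apply, hA.1]
      set v : Fin k × Fin d → (Fin d × Fin d → ℂ) := fun r =>
        ∑ m, tensorVec (fun i => star (A (m, i) r)) (fun b => w (m, b)) with hvdef
      have key : star w ⬝ᵥ tensId (Fin k) ⇑Φ M *ᵥ w
          = ∑ r : Fin k × Fin d, star (v r) ⬝ᵥ choi ⇑Φ *ᵥ v r := by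
        rw [quad_tensId]
        have hblock : ∀ l m : Fin k, (Matrix.of fun i j => M (l, i) (m, j))
            = ∑ r : Fin k × Fin d, Matrix.vecMulVec
                (star (fun i => star (A (l, i) r))) (fun j => star (A (m, j) r)) := by
          intro l m
          ext i j
          simp only [Matrix.sum_apply, Matrix.vecMulVec_apply, Matrix.of_apply, Pi.star_apply,
            star_star]
          exact hMent _ _
        calc ∑ l, ∑ m, star (fun a => w (l, a)) ⬝ᵥ
                Φ (Matrix.of fun i j => M (l, i) (m, j)) *ᵥ (fun b => w (m, b))
            = ∑ l, ∑ m, ∑ r : Fin k × Fin d,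
                star (tensorVec (fun i => star (A (l, i) r)) (fun a => w (l, a))) ⬝ᵥ
                  choi ⇑Φ *ᵥ tensorVec (fun j => star (A (m, j) r)) (fun b => w (m, b)) := by
              refine Finset.sum_congr rfl fun l _ => Finset.sum_congr rfl fun m _ => ?_
              rw [hblock l m, map_sum, dot_sumMat']
              exact Finset.sum_congr rfl fun r _ => (core Φ _ _ _ _).symm
          _ = ∑ l, ∑ r : Fin k × Fin d, ∑ m,
                star (tensorVec (fun i => star (A (l, i) r)) (fun a => w (l, a))) ⬝ᵥ
                  choi ⇑Φ *ᵥ tensorVec (fun j => star (A (m, j) r)) (fun b => w (m, b)) :=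
              Finset.sum_congr rfl fun l _ => Finset.sum_comm
          _ = ∑ r : Fin k × Fin d, ∑ l, ∑ m,
                star (tensorVec (fun i => star (A (l, i) r)) (fun a => w (l, a))) ⬝ᵥ
                  choi ⇑Φ *ᵥ tensorVec (fun j => star (A (m, j) r)) (fun b => w (m, b)) :=
              Finset.sum_comm
          _ = ∑ r : Fin k × Fin d, star (v r) ⬝ᵥ choi ⇑Φ *ᵥ v r := by
              refine Finset.sum_congr rfl fun r _ => ?_
              rw [hvdef, dot_sum_sum']
      rw [key]
      refine Finset.sum_nonneg fun r _ => ?_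
      refine hbp.2 (v r) ⟨fun m i => star (A (m, i) r), fun m b => w (m, b), ?_⟩
      funext p
      simp [hvdef, tensorVec, Finset.sum_apply]
end
end

section
/- Let d ≥ 1 and let a ∈ M_d(ℂ) with r = rank(a). Then there exist vectors φ_1,…,φ_r and ψ_1,…,ψ_r in ℂ^d, with the φ_l pairwise orthogonal and the ψ_l pairwise orthogonal, such that the Choi matrix of the map Ad_a satisfies C_{Ad_a} = α α*, where α = ∑_{l=1}^r φ_l ⊗ ψ_l and α α* is the rank-one matrix with entries α(i,a')·conj(α(j,b')). Conversely, for any r ≤ d and any pairwise orthogonal families φ_1,…,φ_r and ψ_1,…,ψ_r of nonzero vectors in ℂ^d, setting α = ∑_{l=1}^r φ_l ⊗ ψ_l, there exists a ∈ M_d(ℂ) with C_{Ad_a} = α α*. -/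
open Matrix Kronecker
open scoped ComplexOrder

noncomputable section

lemma choi_adFun_apply {d : ℕ} (a : Mat d) (i x j y : Fin d) :
    choi (adFun a) (i, x) (j, y) = starRingEnd ℂ (a i x) * a j y := by
  simp only [choi, adFun, Matrix.of_apply, Matrix.mul_apply, Matrix.conjTranspose_apply,
    Matrix.single, Matrix.of_apply]
  simp [Finset.sum_mul, ite_mul, mul_comm, mul_left_comm, ite_and, Finset.mul_sum,
    Finset.sum_ite_eq]


/-- the Choi matrix of `Ad_a` is `α α*` with
`α = ∑_{l<rank a} φ_l ⊗ ψ_l`, the `φ_l` pairwise orthogonal and the `ψ_l` pairwise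
orthogonal; conversely every such `α α*` (with nonzero orthogonal families, `r ≤ d`)
arises as the Choi matrix of some `Ad_a`. -/
theorem stmt3 (d : ℕ) (hd : 1 ≤ d) (a : Mat d) :
    (∃ φ ψ : Fin a.rank → Fin d → ℂ,
      (∀ l m, l ≠ m → star (φ l) ⬝ᵥ φ m = 0) ∧
      (∀ l m, l ≠ m → star (ψ l) ⬝ᵥ ψ m = 0) ∧
      choi (adFun a) =
        Matrix.vecMulVec (∑ l, tensorVec (φ l) (ψ l))
          (star (∑ l, tensorVec (φ l) (ψ l)))) ∧
    (∀ r : ℕ, r ≤ d → ∀ φ ψ : Fin r → Fin d → ℂ,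
      (∀ l, φ l ≠ 0) → (∀ l, ψ l ≠ 0) →
      (∀ l m, l ≠ m → star (φ l) ⬝ᵥ φ m = 0) →
      (∀ l m, l ≠ m → star (ψ l) ⬝ᵥ ψ m = 0) →
      ∃ b : Mat d, choi (adFun b) =
        Matrix.vecMulVec (∑ l, tensorVec (φ l) (ψ l))
          (star (∑ l, tensorVec (φ l) (ψ l)))) := by
  constructor
  · classical
    have hA : (aᴴ * a).IsHermitian := Matrix.isHermitian_conjTranspose_mul_self a
    set U : Mat d := (Matrix.IsHermitian.eigenvectorUnitary hA : Mat d) with hUdef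
    set μ : Fin d → ℝ := hA.eigenvalues with hμdef
    have hUU' : U * star U = 1 :=
      Matrix.mem_unitaryGroup_iff.mp (Matrix.IsHermitian.eigenvectorUnitary hA).2
    have hU'U : star U * U = 1 :=
      Matrix.mem_unitaryGroup_iff'.mp (Matrix.IsHermitian.eigenvectorUnitary hA).2
    have hdiag : star U * (aᴴ * a) * U = Matrix.diagonal (RCLike.ofReal ∘ μ) :=
      by have := hA.conjStarAlgAut_star_eigenvectorUnitary; rwa [Unitary.conjStarAlgAut_star_apply] at this
    have hcard : Fintype.card {k // μ k ≠ 0} = a.rank := by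
      rw [← Matrix.rank_conjTranspose_mul_self a]
      exact (Matrix.IsHermitian.rank_eq_card_non_zero_eigs hA).symm
    set e : Fin a.rank ≃ {k // μ k ≠ 0} := (Fintype.equivFinOfCardEq hcard).symm with hedef
    set w : Fin d → Fin d → ℂ := fun k i => (a * U) i k with hwdef
    -- key inner-product formula
    have hkey : ∀ k k' : Fin d,
        (∑ i, starRingEnd ℂ (w k i) * w k' i) = if k = k' then (μ k : ℂ) else 0 := by
      intro k k'
      have h1 : ((a * U)ᴴ * (a * U)) k k' = (∑ i, starRingEnd ℂ (w k i) * w k' i) := by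
        simp [Matrix.mul_apply, Matrix.conjTranspose_apply, hwdef, mul_comm]
      have h2 : (a * U)ᴴ * (a * U) = Matrix.diagonal (RCLike.ofReal ∘ μ) := by
        rw [← hdiag, Matrix.conjTranspose_mul, Matrix.star_eq_conjTranspose, ← mul_assoc,
          mul_assoc Uᴴ aᴴ a]
      rw [← h1, h2, Matrix.diagonal_apply]
      simp [Function.comp]
    have hw0 : ∀ k : Fin d, μ k = 0 → w k = 0 := by
      intro k hk
      have := hkey k k
      simp [hk] at this
      exact dotProduct_star_self_eq_zero.mp (by simpa [dotProduct] using this)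
    -- decomposition of a
    have hadec : ∀ i x : Fin d, a i x = ∑ k, w k i * starRingEnd ℂ (U x k) := by
      intro i x
      have : a = a * U * star U := by rw [mul_assoc, hUU', mul_one]
      conv_lhs => rw [this]
      simp [Matrix.mul_apply, hwdef, Matrix.star_apply]
    refine ⟨fun l i => starRingEnd ℂ (w ((e l : {k // μ k ≠ 0}) : Fin d) i),
           fun l x => U x ((e l : {k // μ k ≠ 0}) : Fin d), ?_, ?_, ?_⟩
    · intro l m hlm
      have hne : ((e l : {k // μ k ≠ 0}) : Fin d) ≠ ((e m : {k // μ k ≠ 0}) : Fin d) := by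
        intro h
        exact hlm (e.injective (Subtype.ext h))
      have := hkey ((e l : {k // μ k ≠ 0}) : Fin d) ((e m : {k // μ k ≠ 0}) : Fin d)
      rw [if_neg hne] at this
      have hconj := congrArg (starRingEnd ℂ) this
      simpa [dotProduct, map_sum, mul_comm] using hconj
    · intro l m hlm
      have hne : ((e l : {k // μ k ≠ 0}) : Fin d) ≠ ((e m : {k // μ k ≠ 0}) : Fin d) := by
        intro h
        exact hlm (e.injective (Subtype.ext h))
      have h1 : (star U * U) ((e l : {k // μ k ≠ 0}) : Fin d) ((e m : {k // μ k ≠ 0}) : Fin d)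
          = (0 : ℂ) := by rw [hU'U]; simp [Matrix.one_apply, hne]
      simpa [dotProduct, Matrix.mul_apply, Matrix.star_apply] using h1
    · have halpha : ∀ i x : Fin d,
          (∑ l, tensorVec (fun i => starRingEnd ℂ (w ((e l : {k // μ k ≠ 0}) : Fin d) i))
              (fun x => U x ((e l : {k // μ k ≠ 0}) : Fin d))) (i, x)
            = starRingEnd ℂ (a i x) := by
        intro i x
        have hR : starRingEnd ℂ (a i x) = ∑ k, starRingEnd ℂ (w k i) * U x k := by
          rw [hadec i x, map_sum]; simp
        rw [hR]
        have hsub : (∑ k, starRingEnd ℂ (w k i) * U x k)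
            = ∑ k ∈ Finset.univ.filter (fun k => μ k ≠ 0),
                starRingEnd ℂ (w k i) * U x k := by
          symm
          apply Finset.sum_filter_of_ne
          intro k _ hk
          intro h0
          apply hk
          rw [hw0 k h0]
          simp
        have hsub2 : (∑ k ∈ Finset.univ.filter (fun k => μ k ≠ 0),
                starRingEnd ℂ (w k i) * U x k)
            = ∑ s : {k // μ k ≠ 0}, starRingEnd ℂ (w (s : Fin d) i) * U x (s : Fin d) := by
          rw [Finset.sum_subtype (Finset.univ.filter (fun k => μ k ≠ 0))]
          intro k; simp
        rw [hsub, hsub2, ← Equiv.sum_comp e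
          (fun s : {k // μ k ≠ 0} => starRingEnd ℂ (w (s : Fin d) i) * U x (s : Fin d))]
        simp [tensorVec]
      ext ⟨i, x⟩ ⟨j, y⟩
      rw [choi_adFun_apply, Matrix.vecMulVec_apply, halpha i x, Pi.star_apply, halpha j y]
      simp [mul_comm]
  · intro r hr φ ψ hφ0 hψ0 hφorth hψorth
    refine ⟨Matrix.of fun i x => starRingEnd ℂ ((∑ l, tensorVec (φ l) (ψ l)) (i, x)), ?_⟩
    ext ⟨i, x⟩ ⟨j, y⟩
    rw [choi_adFun_apply, Matrix.vecMulVec_apply]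
    simp [mul_comm]
end
end

section
/- Let d ≥ 1, let k be a positive integer with k ≤ d, and let a ∈ M_d(ℂ) with rank(a) = k. Then the map Ad_a is k-superpositive, but Ad_a cannot be written as a finite sum ∑_{i=1}^n Ad_{a_i} with all a_i ∈ M_d(ℂ) of rank at most k−1. In particular the cone of (k−1)-superpositive maps is strictly contained in the cone of k-superpositive maps for 2 ≤ k ≤ d. -/
open Matrix Kronecker
open scoped ComplexOrder

noncomputable section

lemma rank_smul' {d : ℕ} (μ : ℂ) (hμ : μ ≠ 0) (a : Mat d) : (μ • a).rank = a.rank := by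
  have h1 : μ • a = (μ • (1 : Mat d)) * a := by rw [smul_mul_assoc, one_mul]
  rw [h1, Matrix.rank_mul_eq_right_of_isUnit_det]
  simp [Matrix.det_smul, isUnit_iff_ne_zero, hμ]

lemma key {d : ℕ} (k : ℕ) (hk : 1 ≤ k) (a : Mat d) (ha : a.rank = k) :
    kSuperpositive d k (adFun a) ∧ ¬ kSuperpositive d (k - 1) (adFun a) := by
  constructor
  · exact ⟨1, fun _ => a, fun _ => ha.le, fun x => by simp [adFun]⟩
  · rintro ⟨n, b, hr, he⟩
    have hE : ∀ p q r s : Fin d, (starRingEnd ℂ) (a p r) * a q s =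
        ∑ i, (starRingEnd ℂ) (b i p r) * b i q s := by
      intro p q r s
      have h := congrFun (congrFun (he (Matrix.single p q 1)) r) s
      have h1 : ((aᴴ * Matrix.single p q 1 * a : Mat d)) r s
          = (starRingEnd ℂ) (a p r) * a q s := by
        simp [Matrix.mul_apply, Matrix.single, Matrix.conjTranspose_apply,
          mul_ite, ite_mul, mul_zero, zero_mul, ite_and, Finset.sum_ite_eq, Finset.sum_ite_eq']
      have h2 : ∀ i : Fin n, (((b i)ᴴ * Matrix.single p q 1 * b i : Mat d)) r s
          = (starRingEnd ℂ) (b i p r) * b i q s := by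
        intro i
        simp [Matrix.mul_apply, Matrix.single, Matrix.conjTranspose_apply,
          mul_ite, ite_mul, mul_zero, zero_mul, ite_and, Finset.sum_ite_eq, Finset.sum_ite_eq']
      rw [← h1, ← Finset.sum_congr rfl (fun i _ => h2 i)]
      rw [adFun] at h
      rw [h, Matrix.sum_apply]
    have ha0 : a ≠ 0 := by
      intro h; rw [h, Matrix.rank_zero] at ha; omega
    obtain ⟨p0, q0, h0⟩ : ∃ p0 q0, a p0 q0 ≠ 0 := by
      by_contra h; push_neg at h
      exact ha0 (Matrix.ext fun i j => h i j)
    have hprop : ∀ i p r, a p0 q0 * b i p r = a p r * b i p0 q0 := by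
      intro i p r
      set c : Fin n → ℂ := fun j => a p0 q0 * b j p r - a p r * b j p0 q0 with hc
      have hsum : ∑ j, (starRingEnd ℂ) (c j) * c j = 0 := by
        have e1 := hE p p r r
        have e2 := hE p p0 r q0
        have e3 := hE p0 p q0 r
        have e4 := hE p0 p0 q0 q0
        have expand : ∀ j, (starRingEnd ℂ) (c j) * c j =
            (starRingEnd ℂ) (a p0 q0) * a p0 q0 * ((starRingEnd ℂ) (b j p r) * b j p r)
            - (starRingEnd ℂ) (a p0 q0) * a p r * ((starRingEnd ℂ) (b j p r) * b j p0 q0)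
            - (starRingEnd ℂ) (a p r) * a p0 q0 * ((starRingEnd ℂ) (b j p0 q0) * b j p r)
            + (starRingEnd ℂ) (a p r) * a p r * ((starRingEnd ℂ) (b j p0 q0) * b j p0 q0) := by
          intro j
          simp only [hc, map_sub, _root_.map_mul]
          ring
        rw [Finset.sum_congr rfl (fun j _ => expand j)]
        simp only [Finset.sum_add_distrib, Finset.sum_sub_distrib, ← Finset.mul_sum,
          ← e1, ← e2, ← e3, ← e4]
        ring
      have hsum2 : ∑ j, Complex.normSq (c j) = 0 := by
        have : ((∑ j, Complex.normSq (c j) : ℝ) : ℂ) = 0 := by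
          push_cast
          rw [← hsum]
          exact Finset.sum_congr rfl fun j _ => Complex.normSq_eq_conj_mul_self
        exact_mod_cast this
      have hz : Complex.normSq (c i) = 0 := by
        have := (Finset.sum_eq_zero_iff_of_nonneg
          (fun j _ => Complex.normSq_nonneg (c j))).1 hsum2 i (Finset.mem_univ i)
        exact this
      have : c i = 0 := Complex.normSq_eq_zero.1 hz
      exact sub_eq_zero.1 this
    obtain ⟨i0, hi0⟩ : ∃ i, b i p0 q0 ≠ 0 := by
      by_contra h; push_neg at h
      have e4 := hE p0 p0 q0 q0
      simp only [h, map_zero, zero_mul, mul_zero, Finset.sum_const_zero] at e4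
      rcases mul_eq_zero.1 e4 with h' | h'
      · exact h0 (by simpa using h')
      · exact h0 h'
    have hbi : b i0 = (b i0 p0 q0 / a p0 q0) • a := by
      ext p r
      have h := hprop i0 p r
      have heq : ((b i0 p0 q0 / a p0 q0) • a) p r = b i0 p0 q0 / a p0 q0 * a p r := rfl
      rw [heq]
      field_simp
      linear_combination h
    have hrk : (b i0).rank = k := by
      rw [hbi, rank_smul' _ (div_ne_zero hi0 h0), ha]
    have := hr i0
    omega


/-- if `rank a = k` then `Ad_a` is `k`-superpositive but not
`(k-1)`-superpositive; in particular the cone of `(k-1)`-superpositive maps is strictly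

contained in the cone of `k`-superpositive maps for `2 ≤ k ≤ d`. -/
theorem stmt4 (d k : ℕ) (hd : 1 ≤ d) (hk : 1 ≤ k) (hkd : k ≤ d)
    (a : Mat d) (ha : a.rank = k) :
    (kSuperpositive d k (adFun a) ∧ ¬ kSuperpositive d (k - 1) (adFun a)) ∧
    (∀ k' : ℕ, 2 ≤ k' → k' ≤ d →
      {Φ : Mat d → Mat d | kSuperpositive d (k' - 1) Φ} ⊂
        {Φ : Mat d → Mat d | kSuperpositive d k' Φ}) := by
  refine ⟨key k hk a ha, ?_⟩
  intro k' h2 hk'd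
  set w : Fin d → ℂ := fun i => if (i : ℕ) < k' then 1 else 0 with hw
  have hbrank : (Matrix.diagonal w).rank = k' := by
    rw [Matrix.rank_diagonal]
    have e : {i : Fin d // w i ≠ 0} ≃ Fin k' :=
      { toFun := fun x => ⟨x.1, by
          by_contra hlt; push_neg at hlt
          exact x.2 (by simp [hw, Nat.not_lt.2 hlt])⟩
        invFun := fun j => ⟨⟨j.1, lt_of_lt_of_le j.2 hk'd⟩, by simp [hw, j.2]⟩
        left_inv := fun x => rfl
        right_inv := fun j => rfl }
    rw [Fintype.card_congr e, Fintype.card_fin]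
  have hkey := key k' (by omega) (Matrix.diagonal w) hbrank
  rw [Set.ssubset_def]
  refine ⟨fun Φ hΦ => ?_, fun hcon => hkey.2 (hcon hkey.1)⟩
  obtain ⟨n, c, hc, hce⟩ := hΦ
  exact ⟨n, c, fun i => (hc i).trans (Nat.sub_le _ _), hce⟩
end
end

section
/- Let d ≥ 1 and k ≥ 1, and let Φ be a linear map on the d×d complex matrices. Then Φ is k-superpositive if and only if its Choi matrix C_Φ is k-separable. -/
open Matrix Kronecker
open scoped ComplexOrder

noncomputable section

lemma sum_dite_fin {k r : ℕ} (hr : r ≤ k) (f : Fin r → ℂ) :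
    ∑ l : Fin k, (if h : (l : ℕ) < r then f ⟨l, h⟩ else 0) = ∑ l : Fin r, f l := by
  rw [Fin.sum_univ_eq_sum_range (fun i => if h : i < r then f ⟨i, h⟩ else 0)]
  rw [← Finset.sum_subset (Finset.range_subset_range.mpr hr)
    (fun x _ hx => by rw [Finset.mem_range, not_lt] at hx; simp [Nat.not_lt_of_le hx])]
  rw [← Fin.sum_univ_eq_sum_range]
  exact Finset.sum_congr rfl fun l _ => by simp [l.isLt]

lemma rank_le_of_decomp {d k : ℕ} (a : Mat d) (φ ψ : Fin k → Fin d → ℂ)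
    (h : ∀ i j, a i j = ∑ l, φ l i * ψ l j) : a.rank ≤ k := by
  have ha : a = (Matrix.of fun i l => φ l i) * (Matrix.of fun l j => ψ l j) := by
    ext i j; simp [Matrix.mul_apply, h]
  rw [ha]
  exact (Matrix.rank_mul_le_left _ _).trans
    ((Matrix.rank_le_card_width _).trans (by simp))

lemma decomp_of_rank_le {d k : ℕ} (a : Mat d) (hr : a.rank ≤ k) :
    ∃ φ ψ : Fin k → Fin d → ℂ, ∀ i j, a i j = ∑ l, φ l i * ψ l j := by
  set W := LinearMap.range a.mulVecLin with hW
  have hfr : Module.finrank ℂ W = a.rank := rfl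
  have b := Module.finBasis ℂ W
  rw [hfr] at b
  have hcol : ∀ j : Fin d, (fun i => a i j) ∈ W := by
    intro j
    refine ⟨Pi.single j 1, ?_⟩
    ext i
    simp [Matrix.mulVecLin, Matrix.mulVec, dotProduct, Pi.single_apply]
  refine ⟨fun l i => if h : (l : ℕ) < a.rank then (b ⟨l, h⟩ : Fin d → ℂ) i else 0,
    fun l j => if h : (l : ℕ) < a.rank then b.repr ⟨_, hcol j⟩ ⟨l, h⟩ else 0, ?_⟩
  intro i j
  have : ∀ l : Fin k,
      (if h : (l : ℕ) < a.rank then (b ⟨l, h⟩ : Fin d → ℂ) i else 0) *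
      (if h : (l : ℕ) < a.rank then b.repr ⟨_, hcol j⟩ ⟨l, h⟩ else 0)
      = (if h : (l : ℕ) < a.rank then
          (b ⟨l, h⟩ : Fin d → ℂ) i * b.repr ⟨_, hcol j⟩ ⟨l, h⟩ else 0) := by
    intro l; split <;> simp
  rw [Finset.sum_congr rfl (fun l _ => this l),
    sum_dite_fin hr (fun x : Fin a.rank => (b x : Fin d → ℂ) i * b.repr ⟨_, hcol j⟩ x)]
  have hsum := b.sum_repr ⟨fun i => a i j, hcol j⟩
  have := congrArg (fun w : W => (w : Fin d → ℂ) i) hsum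
  simp only [Submodule.coe_sum, Submodule.coe_smul, Finset.sum_apply, Pi.smul_apply,
    smul_eq_mul] at this
  rw [← this]
  exact Finset.sum_congr rfl fun l _ => mul_comm _ _

lemma key_entry {d : ℕ} (a : Mat d) (i j α β : Fin d) :
    (aᴴ * Matrix.single i j (1:ℂ) * a) α β = star (a i α) * a j β := by
  simp [Matrix.mul_apply, Matrix.single, Finset.sum_mul, Finset.mul_sum, ite_and]

/-- `Φ` is `k`-superpositive iff its Choi matrix is `k`-separable. -/
theorem stmt5 (d k : ℕ) (hd : 1 ≤ d) (hk : 1 ≤ k) (Φ : MatMap d) :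
    kSuperpositive d k ⇑Φ ↔ kSeparable d k (choi ⇑Φ) := by
  constructor
  · rintro ⟨n, a, hrank, hΦ⟩
    refine ⟨n, fun i p => star (a i p.1 p.2), ?_, ?_⟩
    · intro i
      obtain ⟨φ, ψ, hdec⟩ := decomp_of_rank_le (a i) (hrank i)
      refine ⟨fun l => star ∘ φ l, fun l => star ∘ ψ l, ?_⟩
      funext p
      simp [hdec p.1 p.2, Function.comp]
    · ext ⟨i, α⟩ ⟨j, β⟩
      show Φ (Matrix.single i j 1) α β = _
      rw [hΦ]
      simp [Matrix.sum_apply, Matrix.vecMulVec_apply, key_entry]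
  · rintro ⟨n, v, hSR, hchoi⟩
    set a : Fin n → Mat d := fun i => Matrix.of fun p q => star (v i (p, q)) with ha
    refine ⟨n, a, ?_, ?_⟩
    · intro i
      obtain ⟨φ, ψ, hdec⟩ := hSR i
      refine rank_le_of_decomp _ (fun l => star ∘ φ l) (fun l => star ∘ ψ l) ?_
      intro p q
      simp [ha, hdec, Function.comp]
    · intro x
      have key : ∀ i j : Fin d, Φ (Matrix.single i j 1) =
          ∑ m, (a m)ᴴ * Matrix.single i j 1 * a m := by
        intro i j
        ext α β
        have h1 : Φ (Matrix.single i j 1) α β = choi ⇑Φ (i, α) (j, β) := rfl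
        rw [h1, hchoi]
        simp [Matrix.sum_apply, Matrix.vecMulVec_apply, key_entry, ha]
      have hx := Matrix.matrix_eq_sum_single x
      have hsmul : ∀ (i j : Fin d) (c : ℂ),
          c • Matrix.single i j (1:ℂ) = Matrix.single i j c := by
        intro i j c
        rw [Matrix.smul_single, smul_eq_mul, mul_one]
      have h2 : ∀ (m : Fin n) (i j : Fin d),
          (a m)ᴴ * Matrix.single i j (x i j) * a m
          = x i j • ((a m)ᴴ * Matrix.single i j 1 * a m) := by
        intro m i j
        rw [← hsmul i j (x i j), Matrix.mul_smul, Matrix.smul_mul]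
      calc Φ x = Φ (∑ i, ∑ j, Matrix.single i j (x i j)) := by
              conv_lhs => rw [hx]
        _ = ∑ i, ∑ j, x i j • Φ (Matrix.single i j 1) := by
              rw [map_sum]
              refine Finset.sum_congr rfl fun i _ => ?_
              rw [map_sum]
              refine Finset.sum_congr rfl fun j _ => ?_
              rw [← hsmul i j (x i j), LinearMap.map_smul]
        _ = ∑ i, ∑ j, ∑ m, x i j • ((a m)ᴴ * Matrix.single i j 1 * a m) := by
              simp_rw [key, Finset.smul_sum]
        _ = ∑ i, ∑ m, ∑ j, x i j • ((a m)ᴴ * Matrix.single i j 1 * a m) :=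
              Finset.sum_congr rfl fun i _ => Finset.sum_comm
        _ = ∑ m, ∑ i, ∑ j, x i j • ((a m)ᴴ * Matrix.single i j 1 * a m) :=
              Finset.sum_comm
        _ = ∑ m, (a m)ᴴ * x * a m := by
              refine Finset.sum_congr rfl fun m _ => ?_
              simp_rw [← h2]
              conv_rhs => rw [hx]
              rw [Finset.mul_sum, Finset.sum_mul]
              refine Finset.sum_congr rfl fun i _ => ?_
              rw [Finset.mul_sum, Finset.sum_mul]
end
end

section
/- Let d ≥ 1 and k ≥ 1. A Hermitian matrix A indexed by Fin d × Fin d is k-block positive if and only if Tr(A b) ≥ 0 for every k-separable matrix b indexed by Fin d × Fin d; that is, the set of k-block positive matrices equals the dual cone of the set of k-separable matrices with respect to the Hilbert–Schmidt pairing on Hermitian matrices. -/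
open Matrix Kronecker
open scoped ComplexOrder

noncomputable section

lemma trace_mul_vecMulVec {d : ℕ} (A : Mat2 d) (v : Fin d × Fin d → ℂ) :
    (A * Matrix.vecMulVec v (star v)).trace = star v ⬝ᵥ A *ᵥ v := by
  simp only [Matrix.trace, Matrix.diag, Matrix.mul_apply, Matrix.vecMulVec_apply,
    dotProduct, Matrix.mulVec, dotProduct, Pi.star_apply]
  congr 1; ext p
  rw [Finset.mul_sum]
  congr 1; ext q
  ring

/-- a Hermitian matrix `A` is `k`-block positive iff `Tr(A b) ≥ 0` for every
`k`-separable `b` (i.e. `k`-block positive matrices form the dual cone of the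
`k`-separable ones). -/
theorem stmt6 (d k : ℕ) (hd : 1 ≤ d) (hk : 1 ≤ k) (A : Mat2 d) (hA : A.IsHermitian) :
    kBlockPositive d k A ↔ ∀ b : Mat2 d, kSeparable d k b → 0 ≤ (A * b).trace := by
  constructor
  · rintro ⟨-, hpos⟩ b ⟨n, v, hv, rfl⟩
    rw [Finset.mul_sum, Matrix.trace_sum]
    refine Finset.sum_nonneg fun i _ => ?_
    rw [trace_mul_vecMulVec]
    exact hpos (v i) (hv i)
  · intro h
    refine ⟨hA, fun v hv => ?_⟩
    rw [← trace_mul_vecMulVec]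
    exact h _ ⟨1, fun _ => v, fun _ => hv, by simp⟩
end
end

section
/- Let d ≥ 1 and k ≥ 1. If Φ is a k-superpositive linear map on the d×d complex matrices and Ψ is a k-positive linear map on the d×d complex matrices, then both compositions Ψ∘Φ and Φ∘Ψ are k-superpositive. -/
open Matrix Kronecker
open scoped ComplexOrder

noncomputable section

/-! ### Auxiliary lemmas -/

private lemma sum_pad_mul {r k : ℕ} (h : r ≤ k) (f g : Fin r → ℂ) :
    (∑ l : Fin k, (if hl : (l : ℕ) < r then f ⟨l, hl⟩ else 0) *
      (if hl : (l : ℕ) < r then g ⟨l, hl⟩ else 0)) = ∑ l : Fin r, f l * g l := by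
  classical
  have h2 : ∀ l : Fin r, f l * g l =
      (fun m : ℕ => (if hl : m < r then f ⟨m, hl⟩ else 0) *
        (if hl : m < r then g ⟨m, hl⟩ else 0)) l := by
    intro l; simp [l.isLt]
  rw [Finset.sum_congr rfl fun l _ => h2 l,
    Fin.sum_univ_eq_sum_range (fun m : ℕ => (if hl : m < r then f ⟨m, hl⟩ else 0) *
        (if hl : m < r then g ⟨m, hl⟩ else 0)) k,
    Fin.sum_univ_eq_sum_range (fun m : ℕ => (if hl : m < r then f ⟨m, hl⟩ else 0) *
        (if hl : m < r then g ⟨m, hl⟩ else 0)) r]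
  refine (Finset.sum_subset (Finset.range_subset_range.mpr h) ?_).symm
  intro m _ hm
  rw [Finset.mem_range] at hm
  simp [hm]

private lemma schmidt_of_fin {d r k : ℕ} (h : r ≤ k) (φ ψ : Fin r → Fin d → ℂ) :
    SchmidtRankLE d k (fun p => ∑ l, φ l p.1 * ψ l p.2) := by
  refine ⟨fun l i => if hl : (l : ℕ) < r then φ ⟨l, hl⟩ i else 0,
          fun l j => if hl : (l : ℕ) < r then ψ ⟨l, hl⟩ j else 0, ?_⟩
  funext p
  exact (sum_pad_mul h (fun l => φ l p.1) (fun l => ψ l p.2)).symm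

private lemma exists_factor {d k : ℕ} (a : Mat d) (h : a.rank ≤ k) :
    ∃ (P : Matrix (Fin d) (Fin k) ℂ) (Q : Matrix (Fin k) (Fin d) ℂ), a = P * Q := by
  classical
  have hfr : Module.finrank ℂ (Submodule.span ℂ (Set.range aᵀ)) ≤ k := by
    rw [Matrix.rank_eq_finrank_span_cols] at h; exact h
  set W := Submodule.span ℂ (Set.range aᵀ) with hW
  set r := Module.finrank ℂ ↥W with hr
  let b : Module.Basis (Fin r) ℂ W := Module.finBasis ℂ W
  let w : Fin d → W := fun j => ⟨aᵀ j, Submodule.subset_span (Set.mem_range_self j)⟩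
  refine ⟨Matrix.of fun i l => if hl : (l : ℕ) < r then ((b ⟨l, hl⟩ : Fin d → ℂ)) i else 0,
          Matrix.of fun l j => if hl : (l : ℕ) < r then b.repr (w j) ⟨l, hl⟩ else 0, ?_⟩
  ext i j
  rw [Matrix.mul_apply]
  have hsum := sum_pad_mul hfr (fun l => ((b l : Fin d → ℂ)) i) (fun l => b.repr (w j) l)
  simp only [Matrix.of_apply]
  rw [hsum]
  have hb := b.sum_repr (w j)
  have hco := congrArg (fun z : W => (z : Fin d → ℂ) i) hb
  simp only [AddSubmonoidClass.coe_finset_sum, SetLike.val_smul, Finset.sum_apply,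
    Pi.smul_apply, smul_eq_mul] at hco
  rw [show a i j = (w j : Fin d → ℂ) i from rfl, ← hco]
  exact Finset.sum_congr rfl fun l _ => mul_comm _ _

private lemma quad_conj {m n : Type*} [Fintype m] [Fintype n]
    (C : Matrix m m ℂ) (X : Matrix m n ℂ) (u : n → ℂ) :
    star u ⬝ᵥ (Xᴴ * C * X) *ᵥ u = star (X *ᵥ u) ⬝ᵥ C *ᵥ (X *ᵥ u) := by
  simp only [star_mulVec, dotProduct_mulVec, vecMul_vecMul, Matrix.mul_assoc]

private lemma star_quad {m : Type*} [Fintype m] (A : Matrix m m ℂ) (w w' : m → ℂ) :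
    star (star w ⬝ᵥ A *ᵥ w') = star w' ⬝ᵥ Aᴴ *ᵥ w := by
  simp only [dotProduct, mulVec, star_sum, star_mul', star_star, Finset.mul_sum,
    Finset.sum_mul, conjTranspose_apply, Pi.star_apply]
  rw [Finset.sum_comm]
  exact Finset.sum_congr rfl fun q _ => Finset.sum_congr rfl fun p _ => by ring

private lemma conjTranspose_mul_self_eq_sum {ι m : Type*} [Fintype ι] [Fintype m]
    (T : Matrix ι m ℂ) :
    Tᴴ * T = ∑ r, vecMulVec (star (T r)) (T r) := by
  ext p q
  simp [Matrix.mul_apply, Matrix.sum_apply, Matrix.vecMulVec_apply, Matrix.conjTranspose_apply,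
    Pi.star_apply]

private lemma map_eq_sum_std {d : ℕ} (Ψ : MatMap d) (x : Mat d) :
    Ψ x = ∑ p : Fin d, ∑ q : Fin d, x p q • Ψ (Matrix.single p q 1) := by
  conv_lhs => rw [matrix_eq_sum_single x]
  rw [map_sum]
  refine Finset.sum_congr rfl fun p _ => ?_
  rw [map_sum]
  refine Finset.sum_congr rfl fun q _ => ?_
  rw [← _root_.map_smul, smul_single, smul_eq_mul, mul_one]

private lemma conjTranspose_mul_std_mul {d : ℕ} (c : Mat d) (p q α β : Fin d) :
    (cᴴ * Matrix.single p q (1 : ℂ) * c) α β = star (c p α) * c q β := by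
  simp only [Matrix.mul_apply, Matrix.single, Matrix.conjTranspose_apply,
    Matrix.of_apply, mul_ite, ite_mul, mul_zero, zero_mul, mul_one, one_mul, ite_and]
  simp [Finset.sum_ite_eq, Finset.sum_ite_eq']

private lemma conj_mul_apply {d : ℕ} (c y : Mat d) (α β : Fin d) :
    (cᴴ * y * c) α β = ∑ γ, ∑ δ, star (c γ α) * y γ δ * c δ β := by
  simp only [Matrix.mul_apply, Matrix.conjTranspose_apply, Finset.sum_mul, Finset.mul_sum]
  rw [Finset.sum_comm]

private lemma kron_right_one_conj_apply {d s : ℕ} (C : Mat2 d) (G : Matrix (Fin d) (Fin s) ℂ)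
    (p q : Fin s × Fin d) :
    ((G ⊗ₖ (1 : Mat d))ᴴ * C * (G ⊗ₖ (1 : Mat d))) p q
      = ∑ γ : Fin d, ∑ δ : Fin d, star (G γ p.1) * C (γ, p.2) (δ, q.2) * G δ q.1 := by
  simp only [Matrix.mul_apply, Matrix.conjTranspose_apply, Matrix.kroneckerMap_apply,
    Matrix.one_apply, Fintype.sum_prod_type, apply_ite (star : ℂ → ℂ), star_zero,
    mul_ite, ite_mul, mul_zero, zero_mul, mul_one, one_mul,
    Finset.sum_ite_eq, Finset.sum_ite_eq', Finset.mem_univ, if_true,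
    Finset.sum_mul, Finset.mul_sum]
  rw [Finset.sum_comm]

private lemma kron_left_one_conj_apply {d s : ℕ} (C : Mat2 d) (a : Matrix (Fin d) (Fin s) ℂ)
    (p q : Fin d × Fin s) :
    (((1 : Mat d) ⊗ₖ a)ᴴ * C * ((1 : Mat d) ⊗ₖ a)) p q
      = ∑ γ : Fin d, ∑ δ : Fin d, star (a γ p.2) * C (p.1, γ) (q.1, δ) * a δ q.2 := by
  simp only [Matrix.mul_apply, Matrix.conjTranspose_apply, Matrix.kroneckerMap_apply,
    Matrix.one_apply, Fintype.sum_prod_type, apply_ite (star : ℂ → ℂ), star_zero,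
    mul_ite, ite_mul, mul_zero, zero_mul, mul_one, one_mul,
    Finset.sum_ite_eq, Finset.sum_ite_eq', Finset.mem_univ, if_true,
    Finset.sum_mul, Finset.mul_sum]
  rw [Finset.sum_comm]
  simp only [Finset.sum_ite_eq', Finset.mem_univ, if_true]
  have key : ∀ x : Fin d, (∑ x1 : Fin d, ∑ x2 : Fin d,
      if x1 = p.1 then star (a x2 p.2) * C (x1, x2) (q.1, x) * a x q.2 else 0)
      = ∑ x2 : Fin d, star (a x2 p.2) * C (p.1, x2) (q.1, x) * a x q.2 := by
    intro x
    rw [Finset.sum_comm]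
    simp [Finset.sum_ite_eq', Finset.mem_univ]
  rw [Finset.sum_congr rfl fun x _ => key x, Finset.sum_comm]

private lemma kron_right_one_mulVec {d s : ℕ} (G : Matrix (Fin d) (Fin s) ℂ)
    (u : Fin s × Fin d → ℂ) (p : Fin d × Fin d) :
    ((G ⊗ₖ (1 : Mat d)) *ᵥ u) p = ∑ l, G p.1 l * u (l, p.2) := by
  simp only [Matrix.mulVec, dotProduct, Fintype.sum_prod_type,
    Matrix.kroneckerMap_apply, Matrix.one_apply, mul_ite, ite_mul, mul_zero, zero_mul, mul_one]
  simp [Finset.sum_ite_eq, Finset.sum_ite_eq']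

private lemma kron_left_one_mulVec {d s : ℕ} (a : Matrix (Fin d) (Fin s) ℂ)
    (u : Fin d × Fin s → ℂ) (p : Fin d × Fin d) :
    (((1 : Mat d) ⊗ₖ a) *ᵥ u) p = ∑ l, a p.2 l * u (p.1, l) := by
  simp only [Matrix.mulVec, dotProduct, Fintype.sum_prod_type,
    Matrix.kroneckerMap_apply, Matrix.one_apply, mul_ite, ite_mul, mul_zero, zero_mul, one_mul]
  simp [Finset.sum_ite_eq, Finset.sum_ite_eq']

private lemma posSemidef_vecMulVec_star {m : Type*} [Fintype m] [DecidableEq m] (x : m → ℂ) :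
    (vecMulVec x (star x)).PosSemidef := by
  refine Matrix.PosSemidef.of_dotProduct_mulVec_nonneg ?_ ?_
  · ext p q
    simp [Matrix.vecMulVec_apply, Matrix.conjTranspose_apply, mul_comm]
  · intro z
    have key : star z ⬝ᵥ (vecMulVec x (star x)) *ᵥ z
        = star (star x ⬝ᵥ z) * (star x ⬝ᵥ z) := by
      simp only [dotProduct, mulVec, Matrix.vecMulVec_apply, star_sum, star_mul', star_star,
        Pi.star_apply, Finset.mul_sum, Finset.sum_mul]
      rw [Finset.sum_comm]
      exact Finset.sum_congr rfl fun p _ => Finset.sum_congr rfl fun q _ => by ring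
    rw [key]
    exact star_mul_self_nonneg _

private lemma choi_quadform_nonneg {d k : ℕ} (Ψ : MatMap d) (hΨ : kPositive d k ⇑Ψ)
    (v : Fin d × Fin d → ℂ) (hv : SchmidtRankLE d k v) :
    0 ≤ star v ⬝ᵥ (choi ⇑Ψ) *ᵥ v := by
  obtain ⟨φ, ψ, rfl⟩ := hv
  set F : Matrix (Fin d) (Fin k) ℂ := Matrix.of fun i l => φ l i with hF
  set x : Fin k × Fin d → ℂ := fun p => star (φ p.1 p.2) with hx
  set z : Fin k × Fin d → ℂ := fun p => ψ p.1 p.2 with hz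
  have hN := hΨ _ (posSemidef_vecMulVec_star x)
  have key : tensId (Fin k) ⇑Ψ (vecMulVec x (star x))
      = (F ⊗ₖ (1 : Mat d))ᴴ * choi ⇑Ψ * (F ⊗ₖ (1 : Mat d)) := by
    ext p q
    rw [kron_right_one_conj_apply]
    show Ψ (Matrix.of fun a b => vecMulVec x (star x) (p.1, a) (q.1, b)) p.2 q.2 = _
    rw [map_eq_sum_std]
    simp only [Matrix.sum_apply, Matrix.smul_apply, Matrix.of_apply, Matrix.vecMulVec_apply,
      smul_eq_mul, Pi.star_apply, star_star, hx, hF, choi]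
    exact Finset.sum_congr rfl fun γ _ => Finset.sum_congr rfl fun δ _ => by ring
  have hvz : (fun p : Fin d × Fin d => ∑ l, φ l p.1 * ψ l p.2)
      = (F ⊗ₖ (1 : Mat d)) *ᵥ z := by
    funext p
    rw [kron_right_one_mulVec]
    simp [hF, hz]
  rw [hvz, ← quad_conj, ← key]
  exact hN.dotProduct_mulVec_nonneg z

private lemma polarize {E : Type*} [AddCommMonoid E] [Module ℂ E] (f : E → E → ℂ)
    (hadd_l : ∀ a b c, f (a + b) c = f a c + f b c)
    (hadd_r : ∀ a b c, f a (b + c) = f a b + f a c)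
    (hsmul_l : ∀ (t : ℂ) a b, f (t • a) b = star t * f a b)
    (hsmul_r : ∀ (t : ℂ) a b, f a (t • b) = t * f a b)
    (x y : E) (hxx : f x x = 0) (hyy : f y y = 0)
    (hxy2 : f (x + y) (x + y) = 0)
    (hxiy : f (x + Complex.I • y) (x + Complex.I • y) = 0) : f x y = 0 := by
  have h1 : f x y + f y x = 0 := by
    have h := hxy2
    rw [hadd_l, hadd_r, hadd_r, hxx, hyy] at h
    linear_combination h
  have h2 : f x y = f y x := by
    have h := hxiy
    simp only [hadd_l, hadd_r, hsmul_l, hsmul_r, hxx, hyy, Complex.star_def, Complex.conj_I,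
      mul_zero, add_zero, zero_add, neg_mul, neg_neg] at h
    exact mul_left_cancel₀ Complex.I_ne_zero (by linear_combination h)
  linear_combination h1 / 2 + h2 / 2

private lemma choi_isHermitian {d k : ℕ} (hk : 1 ≤ k) (Ψ : MatMap d)
    (hΨ : kPositive d k ⇑Ψ) : (choi ⇑Ψ).IsHermitian := by
  classical
  set C := choi ⇑Ψ with hC
  have hprod : ∀ x y : Fin d → ℂ, SchmidtRankLE d k (tensorVec x y) := by
    intro x y
    have h1 : tensorVec x y
        = fun p => ∑ l : Fin 1, (fun _ => x) l p.1 * (fun _ => y) l p.2 := by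
      funext p; simp [tensorVec]
    rw [h1]
    exact schmidt_of_fin hk _ _
  set f : (Fin d × Fin d → ℂ) → (Fin d × Fin d → ℂ) → ℂ :=
    fun w w' => star w ⬝ᵥ (Cᴴ - C) *ᵥ w' with hfdef
  have hadd_l : ∀ a b c, f (a + b) c = f a c + f b c := by
    intro a b c; simp [hfdef, star_add, add_dotProduct]
  have hadd_r : ∀ a b c, f a (b + c) = f a b + f a c := by
    intro a b c; simp [hfdef, mulVec_add, dotProduct_add]
  have hsmul_l : ∀ (t : ℂ) a b, f (t • a) b = star t * f a b := by
    intro t a b; simp [hfdef, star_smul, smul_dotProduct, smul_eq_mul]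
  have hsmul_r : ∀ (t : ℂ) a b, f a (t • b) = t * f a b := by
    intro t a b; simp [hfdef, mulVec_smul, dotProduct_smul, smul_eq_mul]
  have hdiag : ∀ x y : Fin d → ℂ, f (tensorVec x y) (tensorVec x y) = 0 := by
    intro x y
    have h0 := choi_quadform_nonneg Ψ hΨ _ (hprod x y)
    have him : (star (tensorVec x y) ⬝ᵥ C *ᵥ (tensorVec x y)).im = 0 :=
      ((Complex.nonneg_iff.mp h0).2).symm
    have hst : star (star (tensorVec x y) ⬝ᵥ C *ᵥ tensorVec x y)
        = star (tensorVec x y) ⬝ᵥ C *ᵥ tensorVec x y := by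
      rw [Complex.star_def, Complex.conj_eq_iff_im]; exact him
    have hH : star (tensorVec x y) ⬝ᵥ Cᴴ *ᵥ (tensorVec x y)
        = star (tensorVec x y) ⬝ᵥ C *ᵥ (tensorVec x y) := by
      rw [← star_quad C (tensorVec x y) (tensorVec x y)]
      exact hst
    simp [hfdef, Matrix.sub_mulVec, dotProduct_sub, hH]
  have tens_add_l : ∀ (x x' y : Fin d → ℂ),
      tensorVec (x + x') y = tensorVec x y + tensorVec x' y := by
    intro x x' y; funext p; simp [tensorVec, add_mul]
  have tens_add_r : ∀ (x y y' : Fin d → ℂ),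
      tensorVec x (y + y') = tensorVec x y + tensorVec x y' := by
    intro x y y'; funext p; simp [tensorVec, mul_add]
  have tens_smul_l : ∀ (t : ℂ) (x y : Fin d → ℂ),
      tensorVec (t • x) y = t • tensorVec x y := by
    intro t x y; funext p; simp [tensorVec, smul_eq_mul]; ring
  have tens_smul_r : ∀ (t : ℂ) (x y : Fin d → ℂ),
      tensorVec x (t • y) = t • tensorVec x y := by
    intro t x y; funext p; simp [tensorVec, smul_eq_mul]; ring
  have step1 : ∀ x x' y : Fin d → ℂ, f (tensorVec x y) (tensorVec x' y) = 0 := by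
    intro x x' y
    refine polarize f hadd_l hadd_r hsmul_l hsmul_r _ _ (hdiag x y) (hdiag x' y) ?_ ?_
    · rw [show tensorVec x y + tensorVec x' y = tensorVec (x + x') y from
        (tens_add_l x x' y).symm]
      exact hdiag _ _
    · rw [show tensorVec x y + Complex.I • tensorVec x' y
          = tensorVec (x + Complex.I • x') y from by
        rw [tens_add_l, tens_smul_l]]
      exact hdiag _ _
  have step2 : ∀ x x' y y' : Fin d → ℂ, f (tensorVec x y) (tensorVec x' y') = 0 := by
    intro x x' y y'
    refine polarize (fun u u' => f (tensorVec x u) (tensorVec x' u'))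
      (fun a b c => by simp only [tens_add_r, hadd_l])
      (fun a b c => by simp only [tens_add_r, hadd_r])
      (fun t a b => by simp only [tens_smul_r, hsmul_l])
      (fun t a b => by simp only [tens_smul_r, hsmul_r])
      y y' (step1 x x' y) (step1 x x' y') (step1 x x' (y + y')) (step1 x x' (y + Complex.I • y'))
  have tens_single : ∀ (i α : Fin d),
      tensorVec (Pi.single i (1 : ℂ)) (Pi.single α (1 : ℂ)) = Pi.single (i, α) (1 : ℂ) := by
    intro i α
    funext r
    simp only [tensorVec, Pi.single_apply, Prod.ext_iff, ite_and, mul_ite, mul_one, mul_zero,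
      ite_mul, one_mul, zero_mul]
    rcases eq_or_ne r.1 i with h1 | h1 <;> rcases eq_or_ne r.2 α with h2 | h2 <;> simp [h1, h2]
  have hentry : ∀ p q : Fin d × Fin d, (Cᴴ - C) p q = 0 := by
    intro p q
    have h := step2 (Pi.single p.1 1) (Pi.single q.1 1) (Pi.single p.2 1) (Pi.single q.2 1)
    rw [tens_single, tens_single] at h
    have hval : f (Pi.single p (1 : ℂ)) (Pi.single q (1 : ℂ)) = (Cᴴ - C) p q := by
      simp [hfdef, dotProduct, mulVec, Pi.single_apply, apply_ite (star : ℂ → ℂ),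
        star_one, star_zero, mul_ite, ite_mul, mul_zero, zero_mul, one_mul, mul_one,
        Finset.sum_ite_eq, Finset.sum_ite_eq', Finset.mem_univ]
    rw [hval] at h
    exact h
  have : Cᴴ - C = 0 := by
    ext p q
    exact hentry _ _
  unfold Matrix.IsHermitian
  rw [← sub_eq_zero]
  exact this

private lemma dir1 {d k : ℕ} (hk : 1 ≤ k) (Ψ : MatMap d) (hΨ : kPositive d k ⇑Ψ)
    (a : Mat d) (ha : a.rank ≤ k) :
    ∃ v : (Fin k × Fin d) → (Fin d × Fin d → ℂ),
      (∀ r, SchmidtRankLE d k (v r)) ∧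
      (Matrix.of fun p q : Fin d × Fin d =>
          Ψ (aᴴ * Matrix.single p.1 q.1 1 * a) p.2 q.2)
        = ∑ r, vecMulVec (v r) (star (v r)) := by
  classical
  set C := choi ⇑Ψ with hC
  have hCH : C.IsHermitian := choi_isHermitian hk Ψ hΨ
  set B : Mat d := aᴴᵀ with hB
  have hBrank : B.rank ≤ k := by
    rw [hB, Matrix.rank_transpose, Matrix.rank_conjTranspose]; exact ha
  obtain ⟨P, Q, hPQ⟩ := exists_factor B hBrank
  set Y : Matrix (Fin d × Fin d) (Fin k × Fin d) ℂ := Qᴴ ⊗ₖ (1 : Mat d) with hY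
  set Z : Matrix (Fin k × Fin d) (Fin d × Fin d) ℂ := Pᴴ ⊗ₖ (1 : Mat d) with hZ
  set M : Matrix (Fin k × Fin d) (Fin k × Fin d) ℂ := Yᴴ * C * Y with hM
  have hMps : M.PosSemidef := by
    refine Matrix.PosSemidef.of_dotProduct_mulVec_nonneg ?_ ?_
    · exact Matrix.isHermitian_conjTranspose_mul_mul Y hCH
    · intro u
      rw [hM, quad_conj]
      apply choi_quadform_nonneg Ψ hΨ
      refine ⟨fun l j => Qᴴ j l, fun l β => u (l, β), ?_⟩
      funext p
      rw [hY, kron_right_one_mulVec]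
  obtain ⟨S, hSH, hSS⟩ : ∃ S : Matrix _ _ ℂ, Sᴴ = S ∧ S * S = M := by
    open scoped MatrixOrder in
    exact ⟨CFC.sqrt M, (Matrix.nonneg_iff_posSemidef.mp (CFC.sqrt_nonneg M)).1,
      CFC.sqrt_mul_sqrt_self M hMps.nonneg⟩
  set T : Matrix (Fin k × Fin d) (Fin d × Fin d) ℂ := S * Z with hT
  refine ⟨fun r => star (T r), ?_, ?_⟩
  · intro r
    refine ⟨fun l j => P j l, fun l β => star (S r (l, β)), ?_⟩
    funext p
    show star (T r p) = _
    rw [hT, Matrix.mul_apply]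
    simp only [hZ, Matrix.kroneckerMap_apply, Matrix.conjTranspose_apply, Matrix.one_apply,
      star_sum, star_mul', star_star, Fintype.sum_prod_type, apply_ite (star : ℂ → ℂ),
      star_zero, star_one, mul_ite, ite_mul, mul_zero, zero_mul, mul_one, one_mul,
      Finset.sum_ite_eq, Finset.sum_ite_eq', Finset.mem_univ, if_true]
    exact Finset.sum_congr rfl fun l _ => by ring
  · have key : (Matrix.of fun p q : Fin d × Fin d =>
        Ψ (aᴴ * Matrix.single p.1 q.1 1 * a) p.2 q.2) = (Y * Z)ᴴ * C * (Y * Z) := by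
      have hYZ : Y * Z = Bᴴ ⊗ₖ (1 : Mat d) := by
        rw [hY, hZ, ← Matrix.mul_kronecker_mul, ← Matrix.conjTranspose_mul, hPQ, one_mul]
      rw [hYZ]
      ext p q
      rw [kron_right_one_conj_apply]
      show Ψ (aᴴ * Matrix.single p.1 q.1 1 * a) p.2 q.2 = _
      rw [map_eq_sum_std]
      simp only [Matrix.sum_apply, Matrix.smul_apply, smul_eq_mul]
      refine Finset.sum_congr rfl fun γ _ => Finset.sum_congr rfl fun δ _ => ?_
      rw [conjTranspose_mul_std_mul]
      simp only [hC, choi, Matrix.of_apply, hB, Matrix.conjTranspose_apply,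
        Matrix.transpose_apply, star_star]
      ring
    rw [key]
    have e1 : (Y * Z)ᴴ * C * (Y * Z) = Zᴴ * M * Z := by
      rw [Matrix.conjTranspose_mul, hM]
      simp only [Matrix.mul_assoc]
    have e2 : Tᴴ * T = Zᴴ * M * Z := by
      rw [hT, Matrix.conjTranspose_mul, hSH, ← hSS]
      simp only [Matrix.mul_assoc]
    rw [e1, ← e2, conjTranspose_mul_self_eq_sum]
    exact Finset.sum_congr rfl fun r _ => by rw [star_star]

private lemma dir2 {d k : ℕ} (hk : 1 ≤ k) (Ψ : MatMap d) (hΨ : kPositive d k ⇑Ψ)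
    (a : Mat d) (ha : a.rank ≤ k) :
    ∃ v : (Fin d × Fin k) → (Fin d × Fin d → ℂ),
      (∀ r, SchmidtRankLE d k (v r)) ∧
      (Matrix.of fun p q : Fin d × Fin d =>
          (aᴴ * Ψ (Matrix.single p.1 q.1 1) * a) p.2 q.2)
        = ∑ r, vecMulVec (v r) (star (v r)) := by
  classical
  set C := choi ⇑Ψ with hC
  have hCH : C.IsHermitian := choi_isHermitian hk Ψ hΨ
  obtain ⟨P, Q, hPQ⟩ := exists_factor a ha
  set Y : Matrix (Fin d × Fin d) (Fin d × Fin k) ℂ := (1 : Mat d) ⊗ₖ P with hY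
  set Z : Matrix (Fin d × Fin k) (Fin d × Fin d) ℂ := (1 : Mat d) ⊗ₖ Q with hZ
  set M : Matrix (Fin d × Fin k) (Fin d × Fin k) ℂ := Yᴴ * C * Y with hM
  have hMps : M.PosSemidef := by
    refine Matrix.PosSemidef.of_dotProduct_mulVec_nonneg ?_ ?_
    · exact Matrix.isHermitian_conjTranspose_mul_mul Y hCH
    · intro u
      rw [hM, quad_conj]
      apply choi_quadform_nonneg Ψ hΨ
      refine ⟨fun l i => u (i, l), fun l γ => P γ l, ?_⟩
      funext p
      rw [hY, kron_left_one_mulVec]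
      exact Finset.sum_congr rfl fun l _ => mul_comm _ _
  obtain ⟨S, hSH, hSS⟩ : ∃ S : Matrix _ _ ℂ, Sᴴ = S ∧ S * S = M := by
    open scoped MatrixOrder in
    exact ⟨CFC.sqrt M, (Matrix.nonneg_iff_posSemidef.mp (CFC.sqrt_nonneg M)).1,
      CFC.sqrt_mul_sqrt_self M hMps.nonneg⟩
  set T : Matrix (Fin d × Fin k) (Fin d × Fin d) ℂ := S * Z with hT
  refine ⟨fun r => star (T r), ?_, ?_⟩
  · intro r
    refine ⟨fun l i => star (S r (i, l)), fun l β => star (Q l β), ?_⟩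
    funext p
    show star (T r p) = _
    rw [hT, Matrix.mul_apply]
    simp only [hZ, Matrix.kroneckerMap_apply, Matrix.one_apply,
      star_sum, star_mul', star_star, Fintype.sum_prod_type, apply_ite (star : ℂ → ℂ),
      star_zero, star_one, mul_ite, ite_mul, mul_zero, zero_mul, mul_one, one_mul,
      Finset.sum_ite_eq, Finset.sum_ite_eq', Finset.mem_univ, if_true]
    rw [Finset.sum_comm]
    simp only [Finset.sum_ite_eq', Finset.mem_univ, if_true]
  · have key : (Matrix.of fun p q : Fin d × Fin d =>
        (aᴴ * Ψ (Matrix.single p.1 q.1 1) * a) p.2 q.2) = (Y * Z)ᴴ * C * (Y * Z) := by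
      have hYZ : Y * Z = (1 : Mat d) ⊗ₖ a := by
        rw [hY, hZ, ← Matrix.mul_kronecker_mul, hPQ, one_mul]
      rw [hYZ]
      ext p q
      rw [kron_left_one_conj_apply]
      show (aᴴ * Ψ (Matrix.single p.1 q.1 1) * a) p.2 q.2 = _
      rw [conj_mul_apply]
      refine Finset.sum_congr rfl fun γ _ => Finset.sum_congr rfl fun δ _ => ?_
      simp only [hC, choi, Matrix.of_apply]
    rw [key]
    have e1 : (Y * Z)ᴴ * C * (Y * Z) = Zᴴ * M * Z := by
      rw [Matrix.conjTranspose_mul, hM]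
      simp only [Matrix.mul_assoc]
    have e2 : Tᴴ * T = Zᴴ * M * Z := by
      rw [hT, Matrix.conjTranspose_mul, hSH, ← hSS]
      simp only [Matrix.mul_assoc]
    rw [e1, ← e2, conjTranspose_mul_self_eq_sum]
    exact Finset.sum_congr rfl fun r _ => by rw [star_star]

private lemma superpos_of_choi_sum {d k : ℕ} (L : MatMap d) {ι : Type} [Fintype ι]
    (v : ι → (Fin d × Fin d → ℂ)) (hv : ∀ r, SchmidtRankLE d k (v r))
    (h : choi ⇑L = ∑ r, vecMulVec (v r) (star (v r))) :
    kSuperpositive d k ⇑L := by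
  classical
  set n := Fintype.card ι with hn
  set e : Fin n ≃ ι := (Fintype.equivFin ι).symm with he
  set c : ι → Mat d := fun r => Matrix.of fun i α => star (v r (i, α)) with hc
  have hrank : ∀ r, (c r).rank ≤ k := by
    intro r
    obtain ⟨φ, ψ, hvr⟩ := hv r
    have hfac : c r
        = (Matrix.of fun i l => star (φ l i)) * (Matrix.of fun l α => star (ψ l α)) := by
      ext i α
      simp [hc, Matrix.mul_apply, hvr, star_sum, star_mul', mul_comm]
    rw [hfac]
    refine le_trans (Matrix.rank_mul_le_right _ _) ?_
    simpa using Matrix.rank_le_card_height (Matrix.of fun l α => star (ψ l α))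
  refine ⟨n, fun i => c (e i), fun i => hrank _, ?_⟩
  intro x
  ext α β
  rw [map_eq_sum_std]
  simp only [Matrix.sum_apply, Matrix.smul_apply, smul_eq_mul]
  have hLE : ∀ p q : Fin d, (L (Matrix.single p q 1)) α β
      = ∑ r : ι, v r (p, α) * star (v r (q, β)) := by
    intro p q
    have hh := congrFun (congrFun h ((p, α))) ((q, β))
    simpa [choi, Matrix.sum_apply, Matrix.vecMulVec_apply] using hh
  calc ∑ p, ∑ q, x p q * (L (Matrix.single p q 1)) α β
      = ∑ p, ∑ q, ∑ r : ι, x p q * (v r (p, α) * star (v r (q, β))) := by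
        refine Finset.sum_congr rfl fun p _ => Finset.sum_congr rfl fun q _ => ?_
        rw [hLE p q, Finset.mul_sum]
    _ = ∑ p, ∑ r : ι, ∑ q, x p q * (v r (p, α) * star (v r (q, β))) :=
        Finset.sum_congr rfl fun p _ => Finset.sum_comm
    _ = ∑ r : ι, ∑ p, ∑ q, x p q * (v r (p, α) * star (v r (q, β))) := Finset.sum_comm
    _ = ∑ i : Fin n, ((c (e i))ᴴ * x * c (e i)) α β := by
        rw [Equiv.sum_comp e fun r : ι => ((c r)ᴴ * x * c r) α β]
        refine Finset.sum_congr rfl fun r _ => ?_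
        rw [conj_mul_apply]
        refine Finset.sum_congr rfl fun γ _ => Finset.sum_congr rfl fun δ _ => ?_
        simp only [hc, Matrix.of_apply, star_star]
        ring

/-- the composition (in either order) of a `k`-superpositive map with a
`k`-positive map is `k`-superpositive. -/
theorem stmt11 (d k : ℕ) (hd : 1 ≤ d) (hk : 1 ≤ k) (Φ Ψ : MatMap d)
    (hΦ : kSuperpositive d k ⇑Φ) (hΨ : kPositive d k ⇑Ψ) :
    kSuperpositive d k ⇑(Ψ.comp Φ) ∧ kSuperpositive d k ⇑(Φ.comp Ψ) := by
  obtain ⟨n, a, harank, hΦeq⟩ := hΦ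
  constructor
  · choose v hv hsum using fun i : Fin n => dir1 hk Ψ hΨ (a i) (harank i)
    refine superpos_of_choi_sum (Ψ.comp Φ) (ι := Fin n × (Fin k × Fin d))
      (fun r => v r.1 r.2) (fun r => hv r.1 r.2) ?_
    have hch : choi ⇑(Ψ.comp Φ) = ∑ i : Fin n, Matrix.of fun p q : Fin d × Fin d =>
        Ψ ((a i)ᴴ * Matrix.single p.1 q.1 1 * (a i)) p.2 q.2 := by
      ext p q
      simp only [choi, Matrix.of_apply, LinearMap.coe_comp, Function.comp_apply, hΦeq,
        map_sum, Matrix.sum_apply]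
    rw [hch, Fintype.sum_prod_type]
    exact Finset.sum_congr rfl fun i _ => hsum i
  · choose v hv hsum using fun i : Fin n => dir2 hk Ψ hΨ (a i) (harank i)
    refine superpos_of_choi_sum (Φ.comp Ψ) (ι := Fin n × (Fin d × Fin k))
      (fun r => v r.1 r.2) (fun r => hv r.1 r.2) ?_
    have hch : choi ⇑(Φ.comp Ψ) = ∑ i : Fin n, Matrix.of fun p q : Fin d × Fin d =>
        ((a i)ᴴ * Ψ (Matrix.single p.1 q.1 1) * (a i)) p.2 q.2 := by
      ext p q
      simp only [choi, Matrix.of_apply, LinearMap.coe_comp, Function.comp_apply, hΦeq,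
        Matrix.sum_apply]
    rw [hch, Fintype.sum_prod_type]
    exact Finset.sum_congr rfl fun i _ => hsum i
end
end

section
/- Let d ≥ 1 and k ≥ 1, and let Φ be a Hermiticity-preserving linear map on the d×d complex matrices. The following are equivalent: (1) Φ is k-positive; (2) Ψ∘Φ is k-superpositive for every k-superpositive map Ψ; (3) Ψ∘Φ is completely positive for every k-superpositive map Ψ; (4) for every k-superpositive map Ψ, the number Tr(P_+ · (id_d ⊗ (Ψ∘Φ))(P_+)) is a nonnegative real number, where P_+ = ψ_+ ψ_+* and ψ_+ = ∑_{i=1}^d e_i ⊗ e_i is the unnormalized maximally entangled vector in ℂ^{d·d}. -/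
open Matrix Kronecker
open scoped ComplexOrder

noncomputable section

namespace Stmt16Aux

variable {d k : ℕ}


variable {d k : ℕ}

/-- adjoint map as a linear map -/
def adLM {d : ℕ} (a : Mat d) : MatMap d where
  toFun x := aᴴ * x * a
  map_add' x y := by noncomm_ring
  map_smul' c x := by simp [Matrix.mul_smul, Matrix.smul_mul]

@[simp] lemma adLM_apply (a : Mat d) (x : Mat d) : adLM a x = aᴴ * x * a := rfl

lemma choi_expand (Φ : MatMap d) (x : Mat d) (α β : Fin d) :
    Φ x α β = ∑ i, ∑ j, x i j * choi (⇑Φ) (i, α) (j, β) := by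
  conv_lhs => rw [Matrix.matrix_eq_sum_single x]
  rw [map_sum]
  simp only [Matrix.sum_apply]
  refine Finset.sum_congr rfl fun i _ => ?_
  rw [map_sum]
  simp only [Matrix.sum_apply]
  refine Finset.sum_congr rfl fun j _ => ?_
  have : Matrix.single i j (x i j) = x i j • Matrix.single i j (1:ℂ) := by
    ext a b
    simp [Matrix.single]
  rw [this, Φ.map_smul]
  simp [choi]

/-- conjugation of a quadratic form -/
lemma conj_form {m n : Type} [Fintype m] [Fintype n]
    (Q : Matrix m n ℂ) (C : Matrix m m ℂ) (y : n → ℂ) :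
    star y ⬝ᵥ (Qᴴ * C * Q) *ᵥ y = star (Q *ᵥ y) ⬝ᵥ C *ᵥ (Q *ᵥ y) := by
  simp only [star_mulVec, dotProduct_mulVec, vecMul_vecMul]


def HermPreserving (d : ℕ) (Φ : Mat d → Mat d) : Prop :=
  ∀ x : Mat d, x.IsHermitian → (Φ x).IsHermitian

lemma herm_conj (Φ : MatMap d) (hΦ : HermPreserving d ⇑Φ) (x : Mat d) :
    Φ xᴴ = (Φ x)ᴴ := by
  set u : Mat d := x + xᴴ with hu
  set w : Mat d := Complex.I • (x - xᴴ) with hw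
  have huh : u.IsHermitian := Matrix.isHermitian_add_transpose_self x
  have hwh : w.IsHermitian := by
    unfold Matrix.IsHermitian
    rw [hw, Matrix.conjTranspose_smul, Matrix.conjTranspose_sub,
      Matrix.conjTranspose_conjTranspose]
    simp [Complex.star_def, smul_sub]
    abel
  have hx : x = (1/2 : ℂ) • u - (Complex.I/2) • w := by
    rw [hu, hw, smul_smul]
    rw [show (Complex.I/2) * Complex.I = -(1/2 : ℂ) by
      rw [div_mul_eq_mul_div, Complex.I_mul_I]; norm_num]
    simp [smul_sub, smul_add, sub_eq_add_neg]
    module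
  have hxh : xᴴ = (1/2 : ℂ) • u + (Complex.I/2) • w := by
    rw [hu, hw, smul_smul]
    rw [show (Complex.I/2) * Complex.I = -(1/2 : ℂ) by
      rw [div_mul_eq_mul_div, Complex.I_mul_I]; norm_num]
    simp [smul_sub, smul_add, sub_eq_add_neg]
    module
  clear_value u w
  rw [hxh]
  conv_rhs => rw [hx]
  rw [map_add, map_sub, Φ.map_smul, Φ.map_smul]
  rw [Matrix.conjTranspose_sub, Matrix.conjTranspose_smul, Matrix.conjTranspose_smul,
    (hΦ u huh).eq, (hΦ w hwh).eq]
  rw [Complex.star_def]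
  rw [show (starRingEnd ℂ) (1/2 : ℂ) = (1/2 : ℂ) by
    simp [map_ofNat]]
  rw [show (starRingEnd ℂ) (Complex.I/2) = -(Complex.I/2) by
    rw [map_div₀, Complex.conj_I, map_ofNat]; ring]
  module

lemma choi_herm (Φ : MatMap d) (hΦ : HermPreserving d ⇑Φ) :
    (choi ⇑Φ).IsHermitian := by
  unfold Matrix.IsHermitian
  ext ⟨i, α⟩ ⟨j, β⟩
  rw [Matrix.conjTranspose_apply]
  show star (Φ (Matrix.single j i 1) β α) = Φ (Matrix.single i j 1) α β
  have h1 : (Matrix.single i j (1:ℂ))ᴴ = Matrix.single j i 1 := by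
    ext a b
    simp [Matrix.single, Matrix.conjTranspose_apply, and_comm]
  rw [← h1, herm_conj Φ hΦ, Matrix.conjTranspose_apply, star_star]

lemma tensId_herm (Φ : MatMap d) (hΦ : HermPreserving d ⇑Φ) {I : Type} [Fintype I]
    {M : Matrix (I × Fin d) (I × Fin d) ℂ} (hM : M.IsHermitian) :
    (tensId I ⇑Φ M).IsHermitian := by
  unfold Matrix.IsHermitian
  ext ⟨i, α⟩ ⟨j, β⟩
  rw [Matrix.conjTranspose_apply]
  show star (Φ (Matrix.of fun a b => M (j, a) (i, b)) β α) = _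
  have h1 : (Matrix.of fun a b => M (j, a) (i, b))ᴴ
      = Matrix.of fun a b => M (i, a) (j, b) := by
    ext a b
    rw [Matrix.conjTranspose_apply]
    show star (M (j,b) (i,a)) = M (i,a) (j,b)
    rw [← Matrix.conjTranspose_apply, hM.eq]
  calc star (Φ (Matrix.of fun a b => M (j, a) (i, b)) β α)
      = (Φ (Matrix.of fun a b => M (j, a) (i, b)))ᴴ α β := rfl
    _ = Φ ((Matrix.of fun a b => M (j, a) (i, b))ᴴ) α β := by rw [herm_conj Φ hΦ]
    _ = _ := by rw [h1]; rfl

lemma psd_vecMulVec {n : Type} [Fintype n] (u : n → ℂ) :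
    (Matrix.vecMulVec u (star u)).PosSemidef := by
  refine Matrix.PosSemidef.of_dotProduct_mulVec_nonneg ?_ ?_
  · unfold Matrix.IsHermitian
    ext p q
    simp [Matrix.vecMulVec_apply, Matrix.conjTranspose_apply, mul_comm]
  · intro x
    have : star x ⬝ᵥ Matrix.vecMulVec u (star u) *ᵥ x
        = (star x ⬝ᵥ u) * star (star x ⬝ᵥ u) := by
      simp only [dotProduct, Matrix.mulVec, Matrix.vecMulVec_apply,
        Pi.star_apply, Finset.mul_sum, Finset.sum_mul, star_sum, star_mul', star_star]
      rw [Finset.sum_comm]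
      refine Finset.sum_congr rfl fun p _ => Finset.sum_congr rfl fun q _ => ?_
      ring
    rw [this, mul_comm]
    exact star_mul_self_nonneg (star x ⬝ᵥ u : ℂ)

lemma trace_vecMulVec_mul {n : Type} [Fintype n] (u : n → ℂ) (N : Matrix n n ℂ) :
    (Matrix.vecMulVec u (star u) * N).trace = star u ⬝ᵥ N *ᵥ u := by
  simp only [Matrix.trace, Matrix.diag, Matrix.mul_apply, Matrix.vecMulVec_apply,
    dotProduct, Matrix.mulVec, Pi.star_apply, Finset.mul_sum]
  rw [Finset.sum_comm]
  refine Finset.sum_congr rfl fun p _ => Finset.sum_congr rfl fun q _ => ?_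
  ring


lemma tensId_ad {I : Type} [Fintype I] [DecidableEq I] (a : Mat d)
    (M : Matrix (I × Fin d) (I × Fin d) ℂ) :
    tensId I (fun x => aᴴ * x * a) M = (1 ⊗ₖ a)ᴴ * M * (1 ⊗ₖ a) := by
  ext ⟨i, α⟩ ⟨j, β⟩
  show (aᴴ * (Matrix.of fun γ δ => M (i,γ) (j,δ)) * a) α β = _
  simp only [Matrix.mul_apply, Matrix.conjTranspose_apply, Matrix.kroneckerMap_apply,
    Fintype.sum_prod_type, Matrix.one_apply, star_mul', star_one, star_zero,
    ite_mul, mul_ite, mul_zero, zero_mul, one_mul, mul_one, Matrix.of_apply,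
    apply_ite (star : ℂ → ℂ), Finset.sum_ite_irrel, Finset.sum_const_zero,
    Finset.sum_ite_eq, Finset.sum_ite_eq', Finset.mem_univ, if_true]


/-- the partial "transfer matrix" for `w`. -/
def Tmat {d : ℕ} {I : Type} [Fintype I] (w : I × Fin d → ℂ) :
    Matrix (Fin d × Fin d) (I × Fin d) ℂ :=
  Matrix.of fun p q => w (q.1, p.1) * (if p.2 = q.2 then 1 else 0)

lemma tensId_vv_eq (Φ : MatMap d) {I : Type} [Fintype I] (w : I × Fin d → ℂ) :
    tensId I ⇑Φ (Matrix.vecMulVec (star w) w)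
      = (Tmat w)ᴴ * choi ⇑Φ * (Tmat w) := by
  ext ⟨i, α⟩ ⟨j, β⟩
  show Φ (Matrix.of fun γ δ => Matrix.vecMulVec (star w) w (i,γ) (j,δ)) α β = _
  rw [choi_expand]
  simp only [Matrix.of_apply, Matrix.vecMulVec_apply, Pi.star_apply, Matrix.mul_apply,
    Matrix.conjTranspose_apply, Tmat, Fintype.sum_prod_type, star_mul', star_one, star_zero,
    ite_mul, mul_ite, mul_zero, zero_mul, one_mul, mul_one,
    apply_ite (star : ℂ → ℂ), Finset.sum_ite_irrel, Finset.sum_const_zero,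
    Finset.sum_ite_eq, Finset.sum_ite_eq', Finset.mem_univ, if_true, star_star]
  rw [Finset.sum_comm]
  refine Finset.sum_congr rfl fun γ _ => ?_
  rw [Finset.sum_mul]
  refine Finset.sum_congr rfl fun δ _ => ?_
  ring

lemma Tmat_mulVec {I : Type} [Fintype I] (w x : I × Fin d → ℂ) :
    (Tmat (d := d) w) *ᵥ x = fun p => ∑ i, w (i, p.1) * x (i, p.2) := by
  funext p
  simp only [Matrix.mulVec, dotProduct, Tmat, Matrix.of_apply,
    Fintype.sum_prod_type, ite_mul, mul_ite, mul_zero, zero_mul, one_mul, mul_one,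
    Finset.sum_ite_irrel, Finset.sum_const_zero, Finset.sum_ite_eq,
    Finset.sum_ite_eq', Finset.mem_univ, if_true]

lemma quad_vv (Φ : MatMap d) {I : Type} [Fintype I] (w x : I × Fin d → ℂ) :
    star x ⬝ᵥ tensId I ⇑Φ (Matrix.vecMulVec (star w) w) *ᵥ x
      = star (fun p : Fin d × Fin d => ∑ i, w (i, p.1) * x (i, p.2)) ⬝ᵥ
          choi ⇑Φ *ᵥ (fun p : Fin d × Fin d => ∑ i, w (i, p.1) * x (i, p.2)) := by
  rw [tensId_vv_eq, conj_form, Tmat_mulVec]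

lemma tensId_sum (Φ : MatMap d) {I : Type} [Fintype I] {n : Type} [Fintype n]
    (M : n → Matrix (I × Fin d) (I × Fin d) ℂ) :
    tensId I ⇑Φ (∑ r, M r) = ∑ r, tensId I ⇑Φ (M r) := by
  ext ⟨i, α⟩ ⟨j, β⟩
  show Φ (Matrix.of fun a b => (∑ r, M r) (i,a) (j,b)) α β = _
  have : (Matrix.of fun a b => (∑ r, M r) (i,a) (j,b))
      = ∑ r, Matrix.of fun a b => (M r) (i,a) (j,b) := by
    ext a b
    simp [Finset.sum_apply, Matrix.sum_apply]
  rw [this, map_sum]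
  simp only [Matrix.sum_apply]
  rfl

lemma dot_sum_form {m : Type} [Fintype m] {n : Type} [Fintype n]
    (N : n → Matrix m m ℂ) (x : m → ℂ) :
    star x ⬝ᵥ (∑ r, N r) *ᵥ x = ∑ r, star x ⬝ᵥ (N r) *ᵥ x := by
  have h1 : (∑ r, N r) *ᵥ x = ∑ r, (N r) *ᵥ x := by
    funext p
    simp only [Matrix.mulVec, dotProduct, Matrix.sum_apply, Finset.sum_apply,
      Finset.sum_mul]
    rw [Finset.sum_comm]
  rw [h1]
  simp only [dotProduct, Finset.sum_apply, Pi.star_apply, Finset.mul_sum]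
  rw [Finset.sum_comm]

lemma M_decomp {m : Type} [Fintype m] (B : Matrix m m ℂ) :
    Bᴴ * B = ∑ r, Matrix.vecMulVec (star (B r)) (B r) := by
  ext p q
  simp [Matrix.mul_apply, Matrix.sum_apply, Matrix.vecMulVec_apply,
    Matrix.conjTranspose_apply]

lemma psd_sum {m : Type} [Fintype m] {n : Type} [Fintype n]
    (N : n → Matrix m m ℂ) (h : ∀ r, (N r).PosSemidef) :
    (∑ r, N r).PosSemidef := by
  exact Finset.sum_induction N Matrix.PosSemidef (fun a b ha hb => ha.add hb)
    Matrix.PosSemidef.zero (fun r _ => h r)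


lemma pad_sum {r k : ℕ} (hrk : r ≤ k) (f : Fin r → ℂ) :
    (∑ l : Fin k, if hl : (l : ℕ) < r then f ⟨l, hl⟩ else 0) = ∑ i : Fin r, f i := by
  have h1 : ∀ n : ℕ, (∑ l : Fin n, if hl : (l : ℕ) < r then f ⟨l, hl⟩ else 0)
      = ∑ m ∈ Finset.range n, if hl : m < r then f ⟨m, hl⟩ else 0 :=
    fun n => Fin.sum_univ_eq_sum_range (fun m => if hl : m < r then f ⟨m, hl⟩ else 0) n
  rw [h1 k, ← Finset.sum_subset (Finset.range_subset_range.2 hrk)]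
  · rw [← h1 r]
    refine Finset.sum_congr rfl fun i _ => ?_
    rw [dif_pos i.isLt]
  · intro m _ hm
    rw [dif_neg (by simpa using hm)]

lemma rank_of_schmidt {a : Mat d} (x y : Fin k → Fin d → ℂ)
    (h : ∀ α β, a α β = ∑ l, x l α * y l β) : a.rank ≤ k := by
  classical
  have hmv : ∀ v : Fin d → ℂ, a *ᵥ v = ∑ l, ((y l) ⬝ᵥ v) • x l := by
    intro v
    funext α
    simp only [Matrix.mulVec, dotProduct, Finset.sum_apply, Pi.smul_apply,
      smul_eq_mul, Finset.sum_mul]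
    rw [Finset.sum_comm]
    refine Finset.sum_congr rfl fun β _ => ?_
    rw [h α β, Finset.sum_mul]
    refine Finset.sum_congr rfl fun l _ => by ring
  have hr : LinearMap.range a.mulVecLin ≤ Submodule.span ℂ (Set.range x) := by
    rintro _ ⟨v, rfl⟩
    rw [Matrix.mulVecLin_apply, hmv]
    exact Submodule.sum_mem _ fun l _ =>
      Submodule.smul_mem _ _ (Submodule.subset_span ⟨l, rfl⟩)
  calc a.rank = Module.finrank ℂ (LinearMap.range a.mulVecLin) := rfl
    _ ≤ Module.finrank ℂ (Submodule.span ℂ (Set.range x)) := Submodule.finrank_mono hr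
    _ ≤ (Set.range x).toFinset.card := finrank_span_le_card _
    _ ≤ Fintype.card (Fin k) := by
        rw [Set.toFinset_range]
        exact Finset.card_image_le.trans (le_of_eq (Finset.card_univ))
    _ = k := Fintype.card_fin k

lemma schmidt_of_rank {a : Mat d} (h : a.rank ≤ k) :
    ∃ x y : Fin k → Fin d → ℂ, ∀ α β, a α β = ∑ l, x l α * y l β := by
  classical
  set W : Submodule ℂ (Fin d → ℂ) := Submodule.span ℂ (Set.range aᵀ) with hWdef
  have hW : Module.finrank ℂ W ≤ k := by
    rw [hWdef]; rw [Matrix.rank_eq_finrank_span_cols] at h; exact h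
  set r := Module.finrank ℂ W with hr
  let B : Module.Basis (Fin r) ℂ W := Module.finBasis ℂ W
  have hcol : ∀ β : Fin d, (fun α => a α β) ∈ W := by
    intro β
    exact Submodule.subset_span ⟨β, rfl⟩
  refine ⟨fun l => if hl : (l : ℕ) < r then ((B ⟨l, hl⟩ : W) : Fin d → ℂ) else 0,
    fun l β => if hl : (l : ℕ) < r then B.repr ⟨fun α => a α β, hcol β⟩ ⟨l, hl⟩ else 0, ?_⟩
  intro α β
  have hrep : a α β = ∑ i : Fin r,
      B.repr ⟨fun α => a α β, hcol β⟩ i * ((B i : W) : Fin d → ℂ) α := by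
    have := B.sum_repr ⟨fun α => a α β, hcol β⟩
    have h2 := congrArg (fun z : W => (z : Fin d → ℂ) α) this
    simp only [AddSubmonoidClass.coe_finset_sum, SetLike.val_smul, Finset.sum_apply,
      Pi.smul_apply, smul_eq_mul] at h2
    exact h2.symm
  rw [hrep, ← pad_sum hW (fun i => (B.repr ⟨fun α => a α β, hcol β⟩) i *
    ((B i : W) : Fin d → ℂ) α)]
  refine Finset.sum_congr rfl fun l _ => ?_
  by_cases hl : (l : ℕ) < r
  · simp only [dif_pos hl]; ring
  · simp only [dif_neg hl, zero_mul, mul_zero, Pi.zero_apply]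


lemma sum3_comm {ι₁ ι₂ ι₃ M : Type*} [Fintype ι₁] [Fintype ι₂] [Fintype ι₃]
    [AddCommMonoid M] (f : ι₁ → ι₂ → ι₃ → M) :
    ∑ i, ∑ j, ∑ r, f i j r = ∑ r, ∑ j, ∑ i, f i j r :=
  calc ∑ i, ∑ j, ∑ r, f i j r
      = ∑ i, ∑ r, ∑ j, f i j r := Finset.sum_congr rfl fun i _ => Finset.sum_comm
    _ = ∑ r, ∑ i, ∑ j, f i j r := Finset.sum_comm
    _ = ∑ r, ∑ j, ∑ i, f i j r := Finset.sum_congr rfl fun r _ => Finset.sum_comm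

lemma exists_pinv (a : Mat d) : ∃ p : Mat d, a * p * a = a := by
  classical
  set f : (Fin d → ℂ) →ₗ[ℂ] (Fin d → ℂ) := Matrix.toLin' a with hf
  obtain ⟨W, hW⟩ := Submodule.exists_isCompl (LinearMap.range f)
  set proj := (LinearMap.range f).linearProjOfIsCompl W hW
  obtain ⟨g, hg⟩ := f.rangeRestrict.exists_rightInverse_of_surjective
    (LinearMap.range_rangeRestrict f ▸ rfl)
  set h : (Fin d → ℂ) →ₗ[ℂ] (Fin d → ℂ) := g.comp proj
  refine ⟨LinearMap.toMatrix' h, ?_⟩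
  apply Matrix.toLin'.injective
  rw [Matrix.toLin'_mul, Matrix.toLin'_mul, Matrix.toLin'_toMatrix']
  refine LinearMap.ext fun v => ?_
  show f (h (f v)) = f v
  have h1 : proj (f v) = ⟨f v, LinearMap.mem_range_self f v⟩ :=
    Submodule.linearProjOfIsCompl_apply_left hW ⟨f v, LinearMap.mem_range_self f v⟩
  show f (g (proj (f v))) = f v
  rw [h1]
  have h2 : f.rangeRestrict (g ⟨f v, LinearMap.mem_range_self f v⟩)
      = ⟨f v, LinearMap.mem_range_self f v⟩ := by
    rw [← LinearMap.comp_apply, hg, LinearMap.id_apply]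
  have h3 := congrArg (Subtype.val) h2
  exact h3

lemma psd_decomp {m : Type} [Fintype m] [DecidableEq m] {M : Matrix m m ℂ}
    (h : M.PosSemidef) : ∃ B : Matrix m m ℂ, M = Bᴴ * B := by
  open scoped MatrixOrder in
  obtain ⟨B, rfl⟩ := CStarAlgebra.nonneg_iff_eq_star_mul_self.mp h.nonneg
  exact ⟨B, rfl⟩

lemma kraus_of_choi_psd (Θ : MatMap d) (h : (choi ⇑Θ).PosSemidef) :
    ∃ b : Fin d × Fin d → Mat d, ∀ x, Θ x = ∑ r, (b r)ᴴ * x * (b r) := by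
  obtain ⟨B, hB⟩ := psd_decomp h
  refine ⟨fun r => Matrix.of fun i α => B r (i, α), fun x => ?_⟩
  ext α β
  rw [choi_expand Θ x α β, hB]
  simp only [Matrix.sum_apply, Matrix.mul_apply, Matrix.conjTranspose_apply,
    Matrix.of_apply, Finset.sum_mul, Finset.mul_sum]
  rw [sum3_comm (fun i j r => x i j * (star (B r (i, α)) * B r (j, β)))]
  refine Finset.sum_congr rfl fun r _ => Finset.sum_congr rfl fun j _ =>
    Finset.sum_congr rfl fun i _ => by ring


lemma choi_ad_comp (b : Mat d) (Θ : MatMap d) :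
    choi ⇑((adLM b).comp Θ) = ((1 : Mat d) ⊗ₖ b)ᴴ * choi ⇑Θ * ((1 : Mat d) ⊗ₖ b) := by
  have h0 : choi ⇑((adLM b).comp Θ)
      = tensId (Fin d) (fun x => bᴴ * x * b) (choi ⇑Θ) := rfl
  rw [h0, tensId_ad]

lemma schmidt_kron_mulVec (a : Mat d) (x y : Fin k → Fin d → ℂ)
    (ha : ∀ α β, a α β = ∑ l, x l α * y l β) (v : Fin d × Fin d → ℂ) :
    SchmidtRankLE d k (((1 : Mat d) ⊗ₖ a) *ᵥ v) := by
  refine ⟨fun l i => ∑ β, y l β * v (i, β), fun l => x l, ?_⟩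
  funext p
  obtain ⟨i, α⟩ := p
  show (((1 : Mat d) ⊗ₖ a) *ᵥ v) (i, α) = _
  simp only [Matrix.mulVec, dotProduct, Matrix.kroneckerMap_apply, Matrix.one_apply,
    Fintype.sum_prod_type, ite_mul, one_mul, zero_mul, Finset.sum_ite_irrel,
    Finset.sum_const_zero, Finset.sum_ite_eq, Finset.sum_ite_eq', Finset.mem_univ, if_true]
  calc ∑ β, a α β * v (i, β)
      = ∑ β, ∑ l, x l α * y l β * v (i, β) := by
        refine Finset.sum_congr rfl fun β _ => ?_
        rw [ha α β, Finset.sum_mul]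
    _ = ∑ l, ∑ β, x l α * y l β * v (i, β) := Finset.sum_comm
    _ = ∑ l, (∑ β, y l β * v (i, β)) * x l α := by
        refine Finset.sum_congr rfl fun l _ => ?_
        rw [Finset.sum_mul]
        exact Finset.sum_congr rfl fun β _ => by ring

lemma tensId_Pplus (f : Mat d → Mat d) : tensId (Fin d) f (Pplus d) = choi f := by
  ext ⟨i, α⟩ ⟨j, β⟩
  show f (Matrix.of fun a b => Pplus d (i, a) (j, b)) α β
      = f (Matrix.single i j 1) α β
  congr 1
  ext a b
  simp only [Matrix.of_apply, Pplus, Matrix.vecMulVec_apply, psiPlus, Pi.star_apply,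
    Matrix.single, Matrix.of_apply]
  by_cases h1 : i = a <;> by_cases h2 : j = b <;> simp [h1, h2]

lemma ksp_of_family {Θ : Mat d → Mat d} {ι : Type} [Fintype ι] (b : ι → Mat d)
    (hrank : ∀ i, (b i).rank ≤ k) (hsum : ∀ x, Θ x = ∑ i, (b i)ᴴ * x * (b i)) :
    kSuperpositive d k Θ := by
  refine ⟨Fintype.card ι, fun m => b ((Fintype.equivFin ι).symm m),
    fun m => hrank _, fun x => ?_⟩
  rw [hsum]
  exact Fintype.sum_equiv (Fintype.equivFin ι) _ _ (fun i => by
    simp only [Equiv.symm_apply_apply])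

lemma kPos_iff (Φ : MatMap d) (hΦ : HermPreserving d ⇑Φ) :
    kPositive d k ⇑Φ ↔ kBlockPositive d k (choi ⇑Φ) := by
  constructor
  · intro h
    refine ⟨choi_herm Φ hΦ, ?_⟩
    rintro v ⟨φ, ψ, hv⟩
    set w : Fin k × Fin d → ℂ := fun q => φ q.1 q.2 with hw
    set x : Fin k × Fin d → ℂ := fun q => ψ q.1 q.2 with hx
    have hM : (Matrix.vecMulVec (star w) w).PosSemidef := by
      have := psd_vecMulVec (star w)
      rwa [star_star] at this
    have h2 := (h _ hM).dotProduct_mulVec_nonneg x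
    rw [quad_vv] at h2
    have hveq : v = fun p : Fin d × Fin d => ∑ i, w (i, p.1) * x (i, p.2) := hv
    rw [hveq]
    exact h2
  · intro hBP M hM
    refine Matrix.PosSemidef.of_dotProduct_mulVec_nonneg ?_ ?_
    · exact tensId_herm Φ hΦ hM.1
    · intro x
      obtain ⟨B, hB⟩ := psd_decomp hM
      rw [hB, M_decomp, tensId_sum, dot_sum_form]
      refine Finset.sum_nonneg fun r _ => ?_
      rw [quad_vv]
      exact hBP.2 _ ⟨fun l a => B r (l, a), fun l α => x (l, α), rfl⟩

lemma core12 (Φ : MatMap d) (hBP : kBlockPositive d k (choi ⇑Φ)) (a : Mat d)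
    (ha : a.rank ≤ k) :
    ∃ c : Fin d × Fin d → Mat d, (∀ r, (c r).rank ≤ k) ∧
      ∀ x, aᴴ * Φ x * a = ∑ r, (c r)ᴴ * x * (c r) := by
  obtain ⟨xa, ya, hxy⟩ := schmidt_of_rank ha
  set Q : Mat2 d := (1 : Mat d) ⊗ₖ a with hQ
  have hC' : (Qᴴ * choi ⇑Φ * Q).PosSemidef := by
    refine Matrix.PosSemidef.of_dotProduct_mulVec_nonneg (Matrix.isHermitian_conjTranspose_mul_mul Q hBP.1) fun y => ?_
    rw [conj_form]
    exact hBP.2 _ (schmidt_kron_mulVec a xa ya hxy y)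
  obtain ⟨p, hp⟩ := exists_pinv a
  set Λ : MatMap d := (adLM p).comp ((adLM a).comp Φ) with hΛ
  have hΛpsd : (choi ⇑Λ).PosSemidef := by
    have h2 : choi ⇑Λ = ((1 : Mat d) ⊗ₖ p)ᴴ * (Qᴴ * choi ⇑Φ * Q) * ((1 : Mat d) ⊗ₖ p) := by
      rw [hΛ, choi_ad_comp p ((adLM a).comp Φ), choi_ad_comp a Φ, hQ]
    rw [h2]
    exact hC'.conjTranspose_mul_mul_same _
  obtain ⟨bs, hbs⟩ := kraus_of_choi_psd Λ hΛpsd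
  refine ⟨fun r => bs r * a, fun r => le_trans (Matrix.rank_mul_le_right _ _) ha,
    fun x => ?_⟩
  have key : aᴴ * Φ x * a = aᴴ * (Λ x) * a := by
    show _ = aᴴ * (pᴴ * ((aᴴ * Φ x) * a) * p) * a
    calc aᴴ * Φ x * a = (a * p * a)ᴴ * Φ x * (a * p * a) := by rw [hp]
      _ = aᴴ * (pᴴ * ((aᴴ * Φ x) * a) * p) * a := by
          simp only [Matrix.conjTranspose_mul, Matrix.mul_assoc]
  rw [key, hbs x, Matrix.mul_sum, Matrix.sum_mul]
  refine Finset.sum_congr rfl fun r _ => ?_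
  simp only [Matrix.conjTranspose_mul, Matrix.mul_assoc]

lemma ksp_cp {Θ : MatMap d} (h : kSuperpositive d k ⇑Θ) : CompletelyPositive d ⇑Θ := by
  obtain ⟨n, as, hr, hsum⟩ := h
  intro m _hm M hM
  have h1 : tensId (Fin m) ⇑Θ M
      = ∑ t : Fin n, tensId (Fin m) (fun x => (as t)ᴴ * x * (as t)) M := by
    ext ⟨i, α⟩ ⟨j, β⟩
    show Θ (Matrix.of fun a b => M (i, a) (j, b)) α β = _
    rw [hsum]
    simp only [Matrix.sum_apply]
    rfl
  rw [h1]
  have h2 : ∀ t : Fin n, tensId (Fin m) (fun x => (as t)ᴴ * x * (as t)) M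
      = ((1 : Matrix (Fin m) (Fin m) ℂ) ⊗ₖ as t)ᴴ * M * ((1 : Matrix (Fin m) (Fin m) ℂ) ⊗ₖ as t) :=
    fun t => tensId_ad _ _
  rw [Finset.sum_congr rfl fun t _ => h2 t]
  exact psd_sum _ fun t => hM.conjTranspose_mul_mul_same _

lemma cp_trace {Θ : Mat d → Mat d} (hd : 0 < d) (h : CompletelyPositive d Θ) :
    0 ≤ (Pplus d * tensId (Fin d) Θ (Pplus d)).trace := by
  have hP : (Pplus d).PosSemidef := psd_vecMulVec (psiPlus d)
  have hN := h d hd (Pplus d) hP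
  rw [show Pplus d = Matrix.vecMulVec (psiPlus d) (star (psiPlus d)) from rfl,
    trace_vecMulVec_mul]
  exact hN.dotProduct_mulVec_nonneg _

lemma trace_cond_bp (Φ : MatMap d) (hΦ : HermPreserving d ⇑Φ)
    (h : ∀ Ψ : MatMap d, kSuperpositive d k ⇑Ψ →
      0 ≤ (Pplus d * tensId (Fin d) ⇑(Ψ.comp Φ) (Pplus d)).trace) :
    kBlockPositive d k (choi ⇑Φ) := by
  refine ⟨choi_herm Φ hΦ, ?_⟩
  rintro v ⟨φ, ψ, hv⟩
  set a : Mat d := Matrix.of fun α i => v (i, α) with hadef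
  have ha : kSuperpositive d k ⇑(adLM a) := by
    refine ⟨1, fun _ => a, fun _ => ?_, fun x => by simp⟩
    refine rank_of_schmidt (k := k) (fun l => ψ l) (fun l => φ l) fun α β => ?_
    show v (β, α) = _
    rw [hv]
    exact Finset.sum_congr rfl fun l _ => mul_comm _ _
  have h2 := h (adLM a) ha
  rw [tensId_Pplus, choi_ad_comp,
    show Pplus d = Matrix.vecMulVec (psiPlus d) (star (psiPlus d)) from rfl,
    trace_vecMulVec_mul, conj_form] at h2
  have e2 : ((1 : Mat d) ⊗ₖ a) *ᵥ psiPlus d = v := by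
    funext p
    obtain ⟨i, α⟩ := p
    show (((1 : Mat d) ⊗ₖ a) *ᵥ psiPlus d) (i, α) = v (i, α)
    simp only [Matrix.mulVec, dotProduct, Matrix.kroneckerMap_apply,
      Matrix.one_apply, psiPlus, Fintype.sum_prod_type, ite_mul, mul_ite, one_mul,
      mul_one, zero_mul, mul_zero, Finset.sum_ite_irrel, Finset.sum_const_zero,
      Finset.sum_ite_eq, Finset.sum_ite_eq', Finset.mem_univ, if_true]
    rfl
  rw [e2] at h2
  exact h2


end Stmt16Aux

/-- for a Hermiticity-preserving `Φ`, the following are equivalent: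
(1) `Φ` is `k`-positive; (2) `Ψ ∘ Φ` is `k`-superpositive for every `k`-superpositive
`Ψ`; (3) `Ψ ∘ Φ` is completely positive for every `k`-superpositive `Ψ`;
(4) `Tr(P₊ (id ⊗ (Ψ∘Φ))(P₊)) ≥ 0` for every `k`-superpositive `Ψ`. -/
theorem stmt16 (d k : ℕ) (hd : 1 ≤ d) (hk : 1 ≤ k) (Φ : MatMap d)
    (hΦ : HermPreserving d ⇑Φ) :
    (kPositive d k ⇑Φ ↔
      ∀ Ψ : MatMap d, kSuperpositive d k ⇑Ψ → kSuperpositive d k ⇑(Ψ.comp Φ)) ∧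
    (kPositive d k ⇑Φ ↔
      ∀ Ψ : MatMap d, kSuperpositive d k ⇑Ψ → CompletelyPositive d ⇑(Ψ.comp Φ)) ∧
    (kPositive d k ⇑Φ ↔
      ∀ Ψ : MatMap d, kSuperpositive d k ⇑Ψ →
        0 ≤ (Pplus d * tensId (Fin d) ⇑(Ψ.comp Φ) (Pplus d)).trace) := by
  classical
  have hd0 : 0 < d := hd
  have E1 := Stmt16Aux.kPos_iff (k := k) Φ hΦ
  have imp12 : kPositive d k ⇑Φ →
      ∀ Ψ : MatMap d, kSuperpositive d k ⇑Ψ → kSuperpositive d k ⇑(Ψ.comp Φ) := by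
    intro h1 Ψ hΨ
    obtain ⟨n, as, hr, hsum⟩ := hΨ
    have hBP := E1.mp h1
    choose c hc1 hc2 using fun t : Fin n => Stmt16Aux.core12 Φ hBP (as t) (hr t)
    refine Stmt16Aux.ksp_of_family (Θ := ⇑(Ψ.comp Φ)) (ι := Fin n × (Fin d × Fin d))
      (fun tr => c tr.1 tr.2) (fun tr => hc1 tr.1 tr.2) fun x => ?_
    show Ψ (Φ x) = _
    rw [hsum (Φ x), Fintype.sum_prod_type]
    exact Finset.sum_congr rfl fun t _ => hc2 t x
  have imp23 : (∀ Ψ : MatMap d, kSuperpositive d k ⇑Ψ → kSuperpositive d k ⇑(Ψ.comp Φ)) →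
      ∀ Ψ : MatMap d, kSuperpositive d k ⇑Ψ → CompletelyPositive d ⇑(Ψ.comp Φ) :=
    fun h Ψ hΨ => Stmt16Aux.ksp_cp (h Ψ hΨ)
  have imp34 : (∀ Ψ : MatMap d, kSuperpositive d k ⇑Ψ → CompletelyPositive d ⇑(Ψ.comp Φ)) →
      ∀ Ψ : MatMap d, kSuperpositive d k ⇑Ψ →
        0 ≤ (Pplus d * tensId (Fin d) ⇑(Ψ.comp Φ) (Pplus d)).trace :=
    fun h Ψ hΨ => Stmt16Aux.cp_trace hd0 (h Ψ hΨ)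
  have imp41 : (∀ Ψ : MatMap d, kSuperpositive d k ⇑Ψ →
      0 ≤ (Pplus d * tensId (Fin d) ⇑(Ψ.comp Φ) (Pplus d)).trace) → kPositive d k ⇑Φ :=
    fun h => E1.mpr (Stmt16Aux.trace_cond_bp Φ hΦ h)
  exact ⟨⟨imp12, fun h2 => imp41 (imp34 (imp23 h2))⟩,
    ⟨fun h1 => imp23 (imp12 h1), fun h3 => imp41 (imp34 h3)⟩,
    ⟨fun h1 => imp34 (imp23 (imp12 h1)), imp41⟩⟩
end
end

section
/- Let d ≥ 1, let Φ be a superpositive (i.e., 1-superpositive) linear map on the d×d complex matrices, and let ρ be a positive semidefinite matrix indexed by Fin d × Fin d. Then (id_d ⊗ Φ)(ρ) is separable (1-separable). -/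
open Matrix Kronecker
open scoped ComplexOrder

noncomputable section

lemma rank_le_one_decomp {d : ℕ} (a : Mat d) (h : a.rank ≤ 1) :
    ∃ c r : Fin d → ℂ, ∀ b' b, a b' b = c b' * r b := by
  rw [Matrix.rank_eq_finrank_span_cols] at h
  obtain ⟨v, hv⟩ := finrank_le_one_iff.mp h
  choose f hf using fun b => hv ⟨aᵀ b, Submodule.subset_span ⟨b, rfl⟩⟩
  refine ⟨(v : Fin d → ℂ), f, fun b' b => ?_⟩
  have h2 : ((f b • v : _) : Fin d → ℂ) b' = aᵀ b b' := by rw [hf b]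
  simp only [Submodule.coe_smul, Pi.smul_apply, smul_eq_mul, Matrix.transpose_apply] at h2
  rw [← h2]; ring

/-- if `Φ` is superpositive (`1`-superpositive) and `ρ` is positive
semidefinite, then `(id_d ⊗ Φ)(ρ)` is separable (`1`-separable). -/
theorem stmt17 (d : ℕ) (hd : 1 ≤ d) (Φ : MatMap d) (hΦ : kSuperpositive d 1 ⇑Φ)
    (ρ : Mat2 d) (hρ : ρ.PosSemidef) :
    kSeparable d 1 (tensId (Fin d) ⇑Φ ρ) := by
  classical
  obtain ⟨n, a, hrank, hsum⟩ := hΦ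
  choose cc rr hcr using fun i => rank_le_one_decomp (a i) (hrank i)
  set S := (open scoped MatrixOrder in CFC.sqrt ρ) with hS
  have hSH : S.IsHermitian := open scoped MatrixOrder in (CFC.sqrt_nonneg ρ).posSemidef.isHermitian
  have hSS : S * S = ρ := open scoped MatrixOrder in CFC.sqrt_mul_sqrt_self ρ hρ.nonneg
  have hρ_eq : ∀ p q, ρ p q = ∑ m, S p m * star (S q m) := by
    intro p q
    rw [← hSS, Matrix.mul_apply]
    exact Finset.sum_congr rfl fun m _ => by rw [hSH.apply m q]
  set v : Fin n × (Fin d × Fin d) → (Fin d × Fin d → ℂ) :=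
    fun im p => (∑ b', star (cc im.1 b') * S (p.1, b') im.2) * star (rr im.1 p.2) with hv
  have hschmidt : ∀ im, SchmidtRankLE d 1 (v im) := by
    intro im
    refine ⟨fun _ j => ∑ b', star (cc im.1 b') * S (j, b') im.2,
            fun _ b => star (rr im.1 b), ?_⟩
    funext p
    simp [hv]
  have key : tensId (Fin d) ⇑Φ ρ = ∑ im, Matrix.vecMulVec (v im) (star (v im)) := by
    ext p q
    show (Φ _) p.2 q.2 = _
    rw [hsum, Matrix.sum_apply]
    have RHS : (∑ im, Matrix.vecMulVec (v im) (star (v im))) p q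
        = ∑ i, ∑ m, v (i, m) p * star (v (i, m) q) := by
      rw [Matrix.sum_apply, Fintype.sum_prod_type]
      exact Finset.sum_congr rfl fun i _ => Finset.sum_congr rfl fun m _ => by
        simp [Matrix.vecMulVec_apply]
    rw [RHS]
    refine Finset.sum_congr rfl fun i _ => ?_
    simp only [Matrix.mul_apply, Matrix.conjTranspose_apply, Matrix.of_apply]
    set T : Fin d → Fin d → (Fin d × Fin d) → ℂ := fun b' c' m =>
      star (cc i b') * S (p.1, b') m * star (rr i p.2) *
        (cc i c' * star (S (q.1, c') m) * rr i q.2) with hT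
    calc ∑ c', (∑ b', star (a i b' p.2) * ρ (p.1, b') (q.1, c')) * a i c' q.2
        = ∑ c', ∑ b', ∑ m, T b' c' m := by
          refine Finset.sum_congr rfl fun c' _ => ?_
          rw [Finset.sum_mul]
          refine Finset.sum_congr rfl fun b' _ => ?_
          rw [hρ_eq, hcr i b' p.2, hcr i c' q.2, Finset.mul_sum, Finset.sum_mul]
          refine Finset.sum_congr rfl fun m _ => ?_
          simp only [hT, star_mul', star_star]
          ring
      _ = ∑ b', ∑ c', ∑ m, T b' c' m := Finset.sum_comm
      _ = ∑ b', ∑ m, ∑ c', T b' c' m :=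
          Finset.sum_congr rfl fun b' _ => Finset.sum_comm
      _ = ∑ m, ∑ b', ∑ c', T b' c' m := Finset.sum_comm
      _ = ∑ m, v (i, m) p * star (v (i, m) q) := by
          refine Finset.sum_congr rfl fun m _ => Eq.symm ?_
          simp only [hv]
          rw [star_mul', star_star, star_sum, Finset.sum_mul, Finset.sum_mul]
          refine Finset.sum_congr rfl fun b' _ => ?_
          rw [Finset.sum_mul, Finset.mul_sum]
          refine Finset.sum_congr rfl fun c' _ => ?_
          simp only [hT, star_mul', star_star]
  rw [key]
  obtain ⟨e⟩ := Fintype.truncEquivFin (Fin n × (Fin d × Fin d))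
  refine ⟨Fintype.card (Fin n × (Fin d × Fin d)), v ∘ e.symm, fun j => hschmidt _, ?_⟩
  rw [← e.symm.sum_comp]
  rfl
end
end
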